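/- arXiv:2605.27307 — 4 statements merged into one kernel-verified Lean document; each statement's English description precedes it below -/
import Mathlib

section
/- Let 𝒯 be a triangle family and let n be a positive integer with n ≤ ⌈λ(𝒯)⌉. Then every edge e of the support graph Γ₀(𝒯) is contained in at least n − 2 triples of 𝒯. Equivalently, for every edge e of Γ₀(𝒯), λ(𝒯) ≤ d_e(𝒯) + 2, where d_e(𝒯) is the number of triples of 𝒯 containing e. -/
open Finset Matrix

/-- The sign `[T : e]` of an edge `e` in a triangle `T`. -/
noncomputable def triSign (T e : Finset ℕ) : ℝ :=
  if e ⊆ T ∧ e.card = 2 ∧ T.card = 3 then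
    if (T \ e).max = T.max ∨ (T \ e).min = T.min then 1 else -1
  else 0

/-- A triangle family: a nonempty finite set of 3-element subsets of ℕ. -/
def IsTriFam (F : Finset (Finset ℕ)) : Prop :=
  F.Nonempty ∧ ∀ T ∈ F, T.card = 3

/-- The edges of the support graph of a triangle family. -/
def edgesOf (F : Finset (Finset ℕ)) : Finset (Finset ℕ) :=
  F.biUnion fun T => T.powersetCard 2

/-- The vertices of the support graph of a triangle family. -/
def vertsOf (F : Finset (Finset ℕ)) : Finset ℕ :=
  F.biUnion id

/-- The signed edge-triangle incidence matrix of a triangle family. -/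
noncomputable def delta1 (F : Finset (Finset ℕ)) :
    Matrix {T // T ∈ F} {e // e ∈ edgesOf F} ℝ :=
  Matrix.of fun T e => triSign T.1 e.1

/-- The smallest positive eigenvalue of a matrix. -/
noncomputable def lambdaMinPos {m : Type*} [Fintype m] (M : Matrix m m ℝ) : ℝ :=
  sInf {μ : ℝ | 0 < μ ∧ ∃ v : m → ℝ, v ≠ 0 ∧ M.mulVec v = μ • v}

/-- `λ(𝒯)`: the smallest positive eigenvalue of `δ₁(𝒯)ᵀ δ₁(𝒯)`. -/
noncomputable def lam (F : Finset (Finset ℕ)) : ℝ :=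
  lambdaMinPos ((delta1 F)ᵀ * delta1 F)

/-- The neighborhood of `x` in the support graph `Γ₀(F)`. -/
def nbrs (F : Finset (Finset ℕ)) (x : ℕ) : Finset ℕ :=
  (vertsOf F).filter fun y => x ≠ y ∧ ∃ T ∈ F, x ∈ T ∧ y ∈ T

/-- `φ(t)`: the maximum of `λ(𝒯)` over triangle families with `|𝒯| = t`. -/
noncomputable def phi (t : ℕ) : ℝ :=
  sSup {r : ℝ | ∃ F : Finset (Finset ℕ), IsTriFam F ∧ F.card = t ∧ lam F = r}

/-- `Λ(t) = max_{1 ≤ s ≤ t} φ(s)`. -/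
noncomputable def Lam (t : ℕ) : ℝ :=
  sSup {r : ℝ | ∃ s : ℕ, 1 ≤ s ∧ s ≤ t ∧ phi s = r}

/-- `H(n) = min{ s ≥ 1 : φ(C(n,3)+s) > n - 1 }`. -/
noncomputable def Hfun (n : ℕ) : ℕ :=
  sInf {s : ℕ | 1 ≤ s ∧ (n : ℝ) - 1 < phi (n.choose 3 + s)}

/-- The triangle family `𝒯_{c,b}`: all 3-cliques of `K_c ∨ (b isolated vertices)`. -/
def Tcb (c b : ℕ) : Finset (Finset ℕ) :=
  ((Finset.Icc 1 c).powersetCard 3) ∪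
    (Finset.Icc (c+1) (c+b)).biUnion
      (fun i => ((Finset.Icc 1 c).powersetCard 2).image (fun p => insert i p))

open scoped RealInnerProductSpace

lemma triSign_cases (T e : Finset ℕ) :
    triSign T e = 0 ∨ triSign T e = 1 ∨ triSign T e = -1 := by
  unfold triSign; split_ifs <;> simp

lemma abs_triSign_le (T e : Finset ℕ) : |triSign T e| ≤ 1 := by
  rcases triSign_cases T e with h | h | h <;> rw [h] <;> norm_num

lemma triSign_eq_zero {T e : Finset ℕ} (h : ¬ (e ⊆ T ∧ e.card = 2 ∧ T.card = 3)) :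
    triSign T e = 0 := if_neg h

lemma triSign_ne_zero {T e : Finset ℕ} (h : triSign T e ≠ 0) :
    e ⊆ T ∧ e.card = 2 ∧ T.card = 3 := by
  by_contra hc; exact h (triSign_eq_zero hc)

lemma triSign_sq {T e : Finset ℕ} (h1 : e ⊆ T) (h2 : e.card = 2) (h3 : T.card = 3) :
    triSign T e ^ 2 = 1 := by
  unfold triSign; rw [if_pos ⟨h1, h2, h3⟩]; split_ifs <;> norm_num

lemma abs_triSign_of {T e : Finset ℕ} (h1 : e ⊆ T) (h2 : e.card = 2) (h3 : T.card = 3) :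
    |triSign T e| = 1 := by
  have hsq := triSign_sq h1 h2 h3
  rcases triSign_cases T e with h | h | h
  · rw [h] at hsq; norm_num at hsq
  · rw [h]; norm_num
  · rw [h]; norm_num

lemma tri_eq_union {e f T : Finset ℕ} (hef : e ≠ f) (he : e ⊆ T) (hf : f ⊆ T)
    (he2 : e.card = 2) (hf2 : f.card = 2) (hT : T.card = 3) : T = e ∪ f := by
  have hsub : e ∪ f ⊆ T := Finset.union_subset he hf
  have hns : ¬ f ⊆ e := fun h => hef (Finset.eq_of_subset_of_card_le h (by omega)).symm
  obtain ⟨x, hxf, hxe⟩ := Finset.not_subset.mp hns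
  have hins : insert x e ⊆ e ∪ f :=
    Finset.insert_subset (Finset.mem_union_right _ hxf) Finset.subset_union_left
  have h3 : 3 ≤ (e ∪ f).card := by
    calc 3 = (insert x e).card := by rw [Finset.card_insert_of_notMem hxe, he2]
    _ ≤ _ := Finset.card_le_card hins
  exact (Finset.eq_of_subset_of_card_le hsub (by omega)).symm

lemma sq_sum_le {α : Type*} [Fintype α] (g : α → ℝ) (h1 : ∀ a, |g a| ≤ 1)
    (h2 : ∀ a b, g a ≠ 0 → g b ≠ 0 → a = b) : (∑ a, g a) ^ 2 ≤ ∑ a, |g a| := by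
  by_cases hno : ∃ a, g a ≠ 0
  · obtain ⟨a, ha⟩ := hno
    have hsum : ∑ b, g b = g a :=
      Finset.sum_eq_single a (fun b _ hb => by_contra fun hgb => hb (h2 b a hgb ha))
        (fun h => absurd (Finset.mem_univ a) h)
    rw [hsum]
    have h1a := h1 a
    have : g a ^ 2 ≤ |g a| := by nlinarith [abs_nonneg (g a), sq_abs (g a)]
    exact this.trans (Finset.single_le_sum (fun b _ => abs_nonneg (g b)) (Finset.mem_univ a))
  · push_neg at hno
    simp [hno]

section Eig
variable {ι ε : Type*} [Fintype ι] [Fintype ε] [DecidableEq ι]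

omit [DecidableEq ι] in
lemma dot_eq_inner (u v : EuclideanSpace ℝ ι) :
    ⟪u, v⟫ = dotProduct (fun i => u i) (fun i => v i) := by
  simp [PiLp.inner_apply, RCLike.inner_apply, dotProduct, mul_comm]

lemma key_eig (D : Matrix ι ε ℝ) (x : ε → ℝ) (c : ℝ) (w : ι → ℝ) (hwx : w = D *ᵥ x)
    (hwne : w ≠ 0)
    (hr : w ⬝ᵥ ((D * Dᵀ) *ᵥ w) ≤ c * (w ⬝ᵥ w)) :
    ∃ μ : ℝ, 0 < μ ∧ μ ≤ c ∧ ∃ v : ε → ℝ, v ≠ 0 ∧ (Dᵀ * D) *ᵥ v = μ • v := by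
  classical
  set M : Matrix ι ι ℝ := D * Dᵀ with hMdef
  have hM : M.IsHermitian := by
    simpa [Matrix.conjTranspose_eq_transpose_of_trivial] using
      Matrix.isHermitian_mul_conjTranspose_self D
  have hMT : Mᵀ = M := by
    simpa [Matrix.conjTranspose_eq_transpose_of_trivial] using hM.eq
  have hPSD : M.PosSemidef := by
    simpa [Matrix.conjTranspose_eq_transpose_of_trivial] using
      Matrix.posSemidef_self_mul_conjTranspose D
  set b := hM.eigenvectorBasis with hbdef
  set μ := hM.eigenvalues with hmudef
  have hμnn : ∀ j, 0 ≤ μ j := fun j => hPSD.eigenvalues_nonneg j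
  have hquad : ∀ u : ι → ℝ, u ⬝ᵥ (M *ᵥ u) = (Dᵀ *ᵥ u) ⬝ᵥ (Dᵀ *ᵥ u) := by
    intro u
    rw [hMdef, ← Matrix.mulVec_mulVec, Matrix.dotProduct_mulVec, ← Matrix.mulVec_transpose]
  set cc : ι → ℝ := fun j => (fun i => b j i) ⬝ᵥ w with hccdef
  have heig : ∀ j, M *ᵥ (fun i => b j i) = μ j • (fun i => b j i) := fun j =>
    hM.mulVec_eigenvectorBasis j
  have hc0 : ∀ j, μ j = 0 → cc j = 0 := by
    intro j hj
    have hz : Dᵀ *ᵥ (fun i => b j i) = 0 := by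
      have h0 : (fun i => b j i) ⬝ᵥ (M *ᵥ (fun i => b j i)) = 0 := by
        rw [heig j, hj]; simp
      rw [hquad] at h0
      exact (dotProduct_self_eq_zero).mp h0
    have hcx : cc j = (Dᵀ *ᵥ (fun i => b j i)) ⬝ᵥ x := by
      rw [hccdef]
      simp only [hwx]
      rw [Matrix.dotProduct_mulVec, ← Matrix.mulVec_transpose]
    rw [hcx, hz, zero_dotProduct]
  -- Parseval identities
  have hbw : ∀ j, ⟪b j, (WithLp.toLp 2 w)⟫ = cc j := by
    intro j
    rw [dot_eq_inner]
  have hwb : ∀ j, ⟪(WithLp.toLp 2 w), b j⟫ = cc j := by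
    intro j
    rw [real_inner_comm]
    exact hbw j
  have hpars1 : w ⬝ᵥ w = ∑ j, cc j ^ 2 := by
    have h := (b.sum_inner_mul_inner (WithLp.toLp 2 w)
      (WithLp.toLp 2 w)).symm
    rw [dot_eq_inner] at h
    calc w ⬝ᵥ w
        = ∑ j, ⟪(WithLp.toLp 2 w), b j⟫ * ⟪b j, (WithLp.toLp 2 w)⟫ := h
      _ = ∑ j, cc j ^ 2 := by
          refine Finset.sum_congr rfl fun j _ => ?_
          rw [hwb j, hbw j]
          ring
  have hbMw : ∀ j, ⟪b j, (WithLp.toLp 2 (M *ᵥ w))⟫ = μ j * cc j := by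
    intro j
    rw [dot_eq_inner]
    calc (fun i => b j i) ⬝ᵥ (fun i => (M *ᵥ w) i)
        = (fun i => b j i) ⬝ᵥ (M *ᵥ w) := rfl
      _ = (Mᵀ *ᵥ (fun i => b j i)) ⬝ᵥ w := by
          rw [Matrix.dotProduct_mulVec, ← Matrix.mulVec_transpose]
      _ = (μ j • (fun i => b j i)) ⬝ᵥ w := by rw [hMT, heig j]
      _ = μ j * cc j := by rw [smul_dotProduct]; rfl
  have hpars2 : w ⬝ᵥ (M *ᵥ w) = ∑ j, μ j * cc j ^ 2 := by
    have h := (b.sum_inner_mul_inner (WithLp.toLp 2 w)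
      (WithLp.toLp 2 (M *ᵥ w))).symm
    rw [dot_eq_inner] at h
    calc w ⬝ᵥ (M *ᵥ w)
        = ∑ j, ⟪(WithLp.toLp 2 w), b j⟫ *
            ⟪b j, (WithLp.toLp 2 (M *ᵥ w))⟫ := h
      _ = ∑ j, μ j * cc j ^ 2 := by
          refine Finset.sum_congr rfl fun j _ => ?_
          rw [hbMw j, hwb j]
          ring
  -- conclude by contradiction
  by_contra hcon
  push_neg at hcon
  have hkey : ∀ j, cc j ≠ 0 → c < μ j := by
    intro j hcj
    have hμj : 0 < μ j :=
      lt_of_le_of_ne (hμnn j) (fun h => hcj (hc0 j h.symm))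
    by_contra hle
    push_neg at hle
    -- build eigenvector of Dᵀ * D
    set v : ε → ℝ := Dᵀ *ᵥ (fun i => b j i) with hvdef
    have hDv : D *ᵥ v = μ j • (fun i => b j i) := by
      rw [hvdef, Matrix.mulVec_mulVec, ← hMdef, heig j]
    have hv0 : v ≠ 0 := by
      intro h
      have : μ j • (fun i => b j i) = (0 : ι → ℝ) := by
        rw [← hDv, h, Matrix.mulVec_zero]
      have hcc : μ j * cc j = 0 := by
        have h2 := congrArg (fun u => dotProduct u w) this
        simpa [smul_dotProduct, smul_eq_mul] using h2
      rcases mul_eq_zero.mp hcc with h' | h'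
      · exact (ne_of_gt hμj) h'
      · exact hcj h'
    have hLv : (Dᵀ * D) *ᵥ v = μ j • v := by
      rw [← Matrix.mulVec_mulVec, hDv, Matrix.mulVec_smul, hvdef]
    exact absurd hLv (hcon (μ j) hμj hle v hv0)
  -- derive numeric contradiction
  have hex : ∃ j, cc j ≠ 0 := by
    by_contra hall
    push_neg at hall
    have : w ⬝ᵥ w = 0 := by rw [hpars1]; exact Finset.sum_eq_zero fun j _ => by rw [hall j]; ring
    exact hwne ((dotProduct_self_eq_zero).mp this)
  obtain ⟨j₀, hj₀⟩ := hex
  have hlt : ∑ j, c * cc j ^ 2 < ∑ j, μ j * cc j ^ 2 := by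
    refine Finset.sum_lt_sum (fun j _ => ?_) ⟨j₀, Finset.mem_univ j₀, ?_⟩
    · by_cases hc : cc j = 0
      · rw [hc]; ring_nf; exact le_refl _
      · exact mul_le_mul_of_nonneg_right (le_of_lt (hkey j hc)) (sq_nonneg _)
    · have hpos : 0 < cc j₀ ^ 2 :=
        lt_of_le_of_ne (sq_nonneg _) (Ne.symm (pow_ne_zero 2 hj₀))
      exact mul_lt_mul_of_pos_right (hkey j₀ hj₀) hpos
  rw [← Finset.mul_sum, ← hpars1, ← hpars2] at hlt
  exact absurd hr (not_le.mpr hlt)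

end Eig

lemma mem_edgesOf {F : Finset (Finset ℕ)} {e : Finset ℕ} (he : e ∈ edgesOf F) :
    e.card = 2 ∧ ∃ T ∈ F, e ⊆ T := by
  rw [edgesOf, Finset.mem_biUnion] at he
  obtain ⟨T, hT, he⟩ := he
  rw [Finset.mem_powersetCard] at he
  exact ⟨he.2, T, hT, he.1⟩

lemma lam_le_deg (F : Finset (Finset ℕ)) (hF : IsTriFam F) {e : Finset ℕ}
    (he : e ∈ edgesOf F) :
    lam F ≤ ((F.filter fun T => e ⊆ T).card : ℝ) + 2 := by
  classical
  obtain ⟨he2, T₀, hT₀, heT₀⟩ := mem_edgesOf he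
  set d : ℕ := (F.filter fun T => e ⊆ T).card with hddef
  have hd1 : 1 ≤ d := by
    rw [hddef]
    exact Finset.card_pos.mpr ⟨T₀, Finset.mem_filter.mpr ⟨hT₀, heT₀⟩⟩
  set D := delta1 F with hDdef
  set e' : {f // f ∈ edgesOf F} := ⟨e, he⟩ with he'def
  set x : {f // f ∈ edgesOf F} → ℝ := fun f => if f = e' then 1 else 0 with hxdef
  set w : {T // T ∈ F} → ℝ := D *ᵥ x with hwdef
  have hwT : ∀ T : {T // T ∈ F}, w T = triSign T.1 e := by
    intro T
    rw [hwdef]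
    show (∑ f, D T f * x f) = triSign T.1 e
    rw [hxdef]
    simp only [mul_ite, mul_one, mul_zero]
    rw [Finset.sum_ite_eq' Finset.univ e' (fun f => D T f)]
    simp [he'def, hDdef, delta1]
  -- degree sums
  have hdeg : ∑ T : {T // T ∈ F}, (if e ⊆ T.1 then (1:ℝ) else 0) = d := by
    rw [Finset.sum_coe_sort F (fun T => if e ⊆ T then (1:ℝ) else 0), Finset.sum_boole, hddef]
  have hsumsq : ∑ T : {T // T ∈ F}, triSign T.1 e * triSign T.1 e = d := by
    rw [← hdeg]
    refine Finset.sum_congr rfl fun T _ => ?_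
    by_cases hsub : e ⊆ T.1
    · rw [if_pos hsub, ← sq, triSign_sq hsub he2 (hF.2 T.1 T.2)]
    · rw [if_neg hsub, triSign_eq_zero (fun h => hsub h.1), mul_zero]
  have hdot : w ⬝ᵥ w = d := by
    show (∑ T, w T * w T) = (d:ℝ)
    rw [← hsumsq]
    exact Finset.sum_congr rfl fun T _ => by rw [hwT T]
  -- the quadratic form
  have hDtw : ∀ f : {f // f ∈ edgesOf F},
      (Dᵀ *ᵥ w) f = ∑ T : {T // T ∈ F}, triSign T.1 f.1 * triSign T.1 e := by
    intro f
    show (∑ T, Dᵀ f T * w T) = _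
    refine Finset.sum_congr rfl fun T _ => ?_
    rw [hwT T]
    rfl
  have hquad : w ⬝ᵥ ((D * Dᵀ) *ᵥ w) = ∑ f, ((Dᵀ *ᵥ w) f) ^ 2 := by
    rw [← Matrix.mulVec_mulVec, Matrix.dotProduct_mulVec, ← Matrix.mulVec_transpose]
    exact Finset.sum_congr rfl fun f _ => (sq ((Dᵀ *ᵥ w) f)).symm
  -- term at e'
  have hterm_e : ((Dᵀ *ᵥ w) e') ^ 2 = (d:ℝ) ^ 2 := by
    rw [hDtw e', he'def]
    simp only
    rw [hsumsq]
  -- terms away from e'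
  have hterm_rest : ∑ f ∈ Finset.univ.erase e', ((Dᵀ *ᵥ w) f) ^ 2 ≤ 2 * d := by
    have step1 : ∀ f ∈ Finset.univ.erase e',
        ((Dᵀ *ᵥ w) f) ^ 2 ≤ ∑ T : {T // T ∈ F}, |triSign T.1 f.1 * triSign T.1 e| := by
      intro f hf
      have hfne : f.1 ≠ e := fun h =>
        (Finset.mem_erase.mp hf).1 (Subtype.ext (by rw [h, he'def]))
      rw [hDtw f]
      refine sq_sum_le _ (fun T => ?_) (fun T₁ T₂ h₁ h₂ => ?_)
      · rw [abs_mul]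
        calc |triSign T.1 f.1| * |triSign T.1 e| ≤ 1 * 1 :=
          mul_le_mul (abs_triSign_le _ _) (abs_triSign_le _ _) (abs_nonneg _) zero_le_one
        _ = 1 := by norm_num
      · have h1f := triSign_ne_zero (left_ne_zero_of_mul h₁)
        have h1e := triSign_ne_zero (right_ne_zero_of_mul h₁)
        have h2f := triSign_ne_zero (left_ne_zero_of_mul h₂)
        have h2e := triSign_ne_zero (right_ne_zero_of_mul h₂)
        have e1 : T₁.1 = e ∪ f.1 :=
          tri_eq_union (fun h => hfne h.symm) h1e.1 h1f.1 he2 h1f.2.1 h1e.2.2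
        have e2 : T₂.1 = e ∪ f.1 :=
          tri_eq_union (fun h => hfne h.symm) h2e.1 h2f.1 he2 h2f.2.1 h2e.2.2
        exact Subtype.ext (e1.trans e2.symm)
    calc ∑ f ∈ Finset.univ.erase e', ((Dᵀ *ᵥ w) f) ^ 2
        ≤ ∑ f ∈ Finset.univ.erase e', ∑ T : {T // T ∈ F}, |triSign T.1 f.1 * triSign T.1 e| :=
          Finset.sum_le_sum step1
      _ = ∑ T : {T // T ∈ F}, ∑ f ∈ Finset.univ.erase e', |triSign T.1 f.1 * triSign T.1 e| :=
          Finset.sum_comm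
      _ ≤ ∑ T : {T // T ∈ F}, (if e ⊆ T.1 then (2:ℝ) else 0) := by
          refine Finset.sum_le_sum fun T _ => ?_
          by_cases hsub : e ⊆ T.1
          · rw [if_pos hsub]
            have hTe : |triSign T.1 e| = 1 := abs_triSign_of hsub he2 (hF.2 T.1 T.2)
            calc ∑ f ∈ Finset.univ.erase e', |triSign T.1 f.1 * triSign T.1 e|
                = ∑ f ∈ Finset.univ.erase e', |triSign T.1 f.1| := by
                  refine Finset.sum_congr rfl fun f _ => ?_
                  rw [abs_mul, hTe, mul_one]
              _ ≤ ∑ f ∈ Finset.univ.erase e', (if f.1 ⊆ T.1 then (1:ℝ) else 0) := by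
                  refine Finset.sum_le_sum fun f _ => ?_
                  by_cases hfs : f.1 ⊆ T.1
                  · rw [if_pos hfs]; exact abs_triSign_le _ _
                  · rw [if_neg hfs, triSign_eq_zero (fun h => hfs h.1), abs_zero]
              _ = (((Finset.univ.erase e').filter fun f => f.1 ⊆ T.1).card : ℝ) := by
                  rw [Finset.sum_boole]
              _ ≤ 2 := by
                  have hcard : ((Finset.univ.erase e').filter fun f => f.1 ⊆ T.1).card ≤ 2 := by
                    have hmap : ∀ f ∈ (Finset.univ.erase e').filter fun f => f.1 ⊆ T.1,
                        f.1 ∈ (T.1.powersetCard 2).erase e := by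
                      intro f hf
                      obtain ⟨hf1, hf2⟩ := Finset.mem_filter.mp hf
                      refine Finset.mem_erase.mpr ⟨?_, Finset.mem_powersetCard.mpr
                        ⟨hf2, (mem_edgesOf f.2).1⟩⟩
                      exact fun h => (Finset.mem_erase.mp hf1).1 (Subtype.ext (by rw [h, he'def]))
                    have hinj : Set.InjOn (fun f : {f // f ∈ edgesOf F} => f.1)
                        ((Finset.univ.erase e').filter fun f => f.1 ⊆ T.1) :=
                      fun a _ b _ hab => Subtype.ext hab
                    have := Finset.card_le_card_of_injOn _ hmap hinj
                    have hpc : ((T.1.powersetCard 2).erase e).card = 2 := by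
                      rw [Finset.card_erase_of_mem
                        (Finset.mem_powersetCard.mpr ⟨hsub, he2⟩),
                        Finset.card_powersetCard, hF.2 T.1 T.2]
                      norm_num
                    omega
                  exact_mod_cast hcard
          · rw [if_neg hsub]
            refine le_of_eq (Finset.sum_eq_zero fun f _ => ?_)
            rw [triSign_eq_zero (e := e) (fun h => hsub h.1), mul_zero, abs_zero]
      _ = 2 * d := by
          rw [← hdeg, Finset.mul_sum]
          refine Finset.sum_congr rfl fun T _ => ?_
          by_cases hsub : e ⊆ T.1 <;> simp [hsub]
  -- assemble
  have hEst : w ⬝ᵥ ((D * Dᵀ) *ᵥ w) ≤ ((d:ℝ) + 2) * (w ⬝ᵥ w) := by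
    rw [hquad, hdot]
    have hsplit : ∑ f, ((Dᵀ *ᵥ w) f) ^ 2
        = ((Dᵀ *ᵥ w) e') ^ 2 + ∑ f ∈ Finset.univ.erase e', ((Dᵀ *ᵥ w) f) ^ 2 :=
      (Finset.add_sum_erase Finset.univ _ (Finset.mem_univ e')).symm
    rw [hsplit, hterm_e]
    have : ((d:ℝ) + 2) * d = (d:ℝ)^2 + 2*d := by ring
    rw [this]
    linarith [hterm_rest]
  have hwne : w ≠ 0 := by
    intro h
    rw [h] at hdot
    have : (0:ℝ) = d := by simpa [dotProduct] using hdot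
    have : (d:ℝ) ≠ 0 := Nat.cast_ne_zero.mpr (by omega)
    simp_all
  obtain ⟨μ, hμpos, hμle, v, hv, heq⟩ := key_eig D x ((d:ℝ)+2) w hwdef hwne hEst
  have hmem : μ ∈ {μ : ℝ | 0 < μ ∧ ∃ v : {f // f ∈ edgesOf F} → ℝ, v ≠ 0 ∧
      ((delta1 F)ᵀ * delta1 F).mulVec v = μ • v} :=
    ⟨hμpos, v, hv, by rw [← hDdef]; exact heq⟩
  have hbdd : BddBelow {μ : ℝ | 0 < μ ∧ ∃ v : {f // f ∈ edgesOf F} → ℝ, v ≠ 0 ∧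
      ((delta1 F)ᵀ * delta1 F).mulVec v = μ • v} :=
    ⟨0, fun y hy => le_of_lt hy.1⟩
  calc lam F ≤ μ := csInf_le hbdd hmem
    _ ≤ (d:ℝ) + 2 := hμle


/-- If `n ≤ ⌈λ(𝒯)⌉` then every edge of the support graph lies in at least `n - 2`
triples of `𝒯`; equivalently, `λ(𝒯) ≤ d_e(𝒯) + 2` for every support edge `e`. -/
theorem stmt1 (F : Finset (Finset ℕ)) (hF : IsTriFam F) (n : ℕ) (hn : 1 ≤ n)
    (hlam : (n : ℤ) ≤ ⌈lam F⌉) :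
    (∀ e ∈ edgesOf F, (n : ℤ) - 2 ≤ ((F.filter fun T => e ⊆ T).card : ℤ)) ∧
    (∀ e ∈ edgesOf F, lam F ≤ ((F.filter fun T => e ⊆ T).card : ℝ) + 2) := by
  refine ⟨fun e he => ?_, fun e he => lam_le_deg F hF he⟩
  have h2 := lam_le_deg F hF he
  have hceil : ⌈lam F⌉ ≤ ((F.filter fun T => e ⊆ T).card : ℤ) + 2 :=
    Int.ceil_le.mpr (by push_cast; exact h2)
  omega
end

section
/- Let 𝒯 be a triangle family and let n be a positive integer with n ≤ ⌈λ(𝒯)⌉. Then for every edge {x,y} of the support graph G = Γ₀(𝒯), the number of common neighbors of x and y in G satisfies |N_G(x) ∩ N_G(y)| ≥ n − 2. -/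
open Finset Matrix

-- ===== auxiliary lemmas =====

lemma exists_pos_eigen_le' {m : Type*} [Fintype m] [DecidableEq m]
    (L : Matrix m m ℝ) (hPSD : L.PosSemidef)
    (u : m → ℝ) (t : ℝ) (htpos : 0 < t)
    (ht : u ⬝ᵥ L.mulVec u = t)
    (hB : L.mulVec u ⬝ᵥ L.mulVec u ≤ t * (t + 2)) :
    ∃ μ : ℝ, 0 < μ ∧ (∃ v : m → ℝ, v ≠ 0 ∧ L.mulVec v = μ • v) ∧ μ ≤ t + 2 := by
  have hL : L.IsHermitian := hPSD.1
  by_contra hcon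
  push_neg at hcon
  have hip : ∀ w w' : EuclideanSpace ℝ m, (inner ℝ w w' : ℝ) = ⇑w ⬝ᵥ ⇑w' := fun w w' => by simp [PiLp.inner_apply, dotProduct, mul_comm]
  set b := hL.eigenvectorBasis with hb
  set μ := hL.eigenvalues with hμ
  have hsym : Lᵀ = L := by
    rw [← Matrix.conjTranspose_eq_transpose_of_trivial]; exact hL
  set u' : EuclideanSpace ℝ m := (WithLp.equiv 2 (m → ℝ)).symm u with hu'
  set v' : EuclideanSpace ℝ m := (WithLp.equiv 2 (m → ℝ)).symm (L.mulVec u) with hv'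
  have hcu : ∀ i, (inner ℝ (b i) u' : ℝ) = ⇑(b i) ⬝ᵥ u := fun i => hip (b i) u'
  have hbv : ∀ i, (inner ℝ (b i) v' : ℝ) = μ i * (inner ℝ (b i) u' : ℝ) := by
    intro i
    rw [hip, hcu]
    show ⇑(b i) ⬝ᵥ (L.mulVec u) = _
    rw [Matrix.dotProduct_mulVec, ← Matrix.mulVec_transpose, hsym,
      hL.mulVec_eigenvectorBasis i, smul_dotProduct]
    rfl
  set c : m → ℝ := fun i => (inner ℝ (b i) u' : ℝ) with hc
  have hub : ∀ i, (inner ℝ u' (b i) : ℝ) = c i := fun i => real_inner_comm (b i) u'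
  have hvb : ∀ i, (inner ℝ v' (b i) : ℝ) = μ i * c i := fun i =>
    (real_inner_comm (b i) v').trans (hbv i)
  have hT : ∑ i, μ i * c i ^ 2 = t := by
    have h := b.sum_inner_mul_inner u' v'
    have h2 : (inner ℝ u' v' : ℝ) = t := by rw [hip]; exact ht
    rw [h2] at h
    rw [← h]
    refine Finset.sum_congr rfl fun i _ => ?_
    rw [hbv i, hub i]
    ring
  have hB2 : ∑ i, μ i ^ 2 * c i ^ 2 ≤ t * (t + 2) := by
    have h := b.sum_inner_mul_inner v' v'
    have h2 : (inner ℝ v' v' : ℝ) = L.mulVec u ⬝ᵥ L.mulVec u := by rw [hip]; rfl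
    rw [h2] at h
    calc ∑ i, μ i ^ 2 * c i ^ 2 = ∑ i, (inner ℝ v' (b i) : ℝ) * (inner ℝ (b i) v' : ℝ) := by
          refine Finset.sum_congr rfl fun i _ => ?_
          rw [hvb i, hbv i]
          ring
      _ = L.mulVec u ⬝ᵥ L.mulVec u := h
      _ ≤ t * (t + 2) := hB
  have hnn : ∀ i, 0 ≤ μ i := fun i => hPSD.eigenvalues_nonneg i
  have hgt : ∀ i, 0 < μ i → t + 2 < μ i := by
    intro i hi
    refine hcon (μ i) hi ⟨⇑(b i), ?_, hL.mulVec_eigenvectorBasis i⟩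
    intro h0
    refine b.orthonormal.ne_zero i ?_
    ext j
    exact congrFun h0 j
  have hex : ∃ i : m, 0 < μ i * c i ^ 2 := by
    by_contra hc2
    push_neg at hc2
    have : (∑ i, μ i * c i ^ 2) ≤ 0 := Finset.sum_nonpos fun i _ => hc2 i
    rw [hT] at this; linarith
  obtain ⟨i0, hi0⟩ := hex
  have hterm : ∀ i : m, i ∈ (Finset.univ : Finset m) →
      (t + 2) * (μ i * c i ^ 2) ≤ μ i ^ 2 * c i ^ 2 := by
    intro i _
    rcases (hnn i).eq_or_lt with h | h
    · rw [← h]; simp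
    · have h2 := hgt i h
      have h3 : 0 ≤ (μ i * c i ^ 2) * (μ i - (t + 2)) :=
        mul_nonneg (mul_nonneg h.le (sq_nonneg _)) (by linarith)
      nlinarith [h3]
  have hμ0 : 0 < μ i0 := by
    rcases (hnn i0).eq_or_lt with h | h
    · exfalso; rw [← h] at hi0; simp at hi0
    · exact h
  have hstrict : (t + 2) * (μ i0 * c i0 ^ 2) < μ i0 ^ 2 * c i0 ^ 2 := by
    have h3 : 0 < (μ i0 * c i0 ^ 2) * (μ i0 - (t + 2)) :=
      mul_pos hi0 (by linarith [hgt i0 hμ0])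
    nlinarith [h3]
  have hlt : (t + 2) * t < ∑ i, μ i ^ 2 * c i ^ 2 := by
    calc (t + 2) * t = ∑ i, (t + 2) * (μ i * c i ^ 2) := by rw [← Finset.mul_sum, hT]
      _ < ∑ i, μ i ^ 2 * c i ^ 2 :=
          Finset.sum_lt_sum hterm ⟨i0, Finset.mem_univ i0, hstrict⟩
  linarith

lemma abs_triSign' (T e : Finset ℕ) :
    |triSign T e| = if e ⊆ T ∧ e.card = 2 ∧ T.card = 3 then 1 else 0 := by
  unfold triSign; split_ifs <;> norm_num

lemma entry_eq (F : Finset (Finset ℕ)) (e' e : {e // e ∈ edgesOf F}) :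
    ((delta1 F)ᵀ * delta1 F) e' e = ∑ T ∈ F, triSign T e'.1 * triSign T e.1 := by
  rw [Matrix.mul_apply, ← Finset.sum_coe_sort F (fun T => triSign T e'.1 * triSign T e.1)]
  rfl

lemma edge_card2 (F : Finset (Finset ℕ)) {e : Finset ℕ} (he : e ∈ edgesOf F) : e.card = 2 := by
  rw [edgesOf, mem_biUnion] at he
  obtain ⟨T, _, hm⟩ := he
  exact (Finset.mem_powersetCard.1 hm).2

set_option maxHeartbeats 1000000 in
lemma sum_abs_triSign (F : Finset (Finset ℕ)) (hF : IsTriFam F) {T : Finset ℕ} (hT : T ∈ F) :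
    ∑ e : {e // e ∈ edgesOf F}, |triSign T e.1| = 3 := by
  have hc3 : T.card = 3 := hF.2 T hT
  have hPsub : T.powersetCard 2 ⊆ edgesOf F := fun e hmem => by
    rw [edgesOf, mem_biUnion]; exact ⟨T, hT, hmem⟩
  calc ∑ e : {e // e ∈ edgesOf F}, |triSign T e.1|
      = ∑ e : {e // e ∈ edgesOf F}, if e.1 ∈ T.powersetCard 2 then (1:ℝ) else 0 := by
        refine Finset.sum_congr rfl fun e _ => ?_
        rw [abs_triSign']
        by_cases h : e.1 ⊆ T ∧ e.1.card = 2
        · rw [if_pos ⟨h.1, h.2, hc3⟩, if_pos (Finset.mem_powersetCard.2 h)]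
        · rw [if_neg (fun hx => h ⟨hx.1, hx.2.1⟩),
            if_neg (fun hx => h (Finset.mem_powersetCard.1 hx))]
    _ = ((Finset.univ.filter
          (fun e : {e // e ∈ edgesOf F} => e.1 ∈ T.powersetCard 2)).card : ℝ) :=
        Finset.sum_boole _ _
    _ = ((T.powersetCard 2).card : ℝ) := by
        congr 1
        apply Finset.card_bij (fun (e : {e // e ∈ edgesOf F}) _ => e.1)
        · intro e hme
          exact (Finset.mem_filter.1 hme).2
        · intro e₁ h₁ e₂ h₂ h
          exact Subtype.ext h
        · intro a ha
          exact ⟨⟨a, hPsub ha⟩, Finset.mem_filter.2 ⟨Finset.mem_univ _, ha⟩, rfl⟩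
    _ = 3 := by rw [Finset.card_powersetCard, hc3]; norm_num

lemma tcard (F : Finset (Finset ℕ)) (hF : IsTriFam F) (x y : ℕ) (hxy : x ≠ y)
    (he : ({x, y} : Finset ℕ) ∈ edgesOf F) :
    1 ≤ (F.filter fun T => ({x, y} : Finset ℕ) ⊆ T).card ∧
      (F.filter fun T => ({x, y} : Finset ℕ) ⊆ T).card ≤ (nbrs F x ∩ nbrs F y).card := by
  set ω : Finset ℕ := {x, y} with hωdef
  set S := F.filter fun T => ω ⊆ T with hSdef
  have hω2 : ω.card = 2 := card_pair hxy
  constructor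
  · rw [edgesOf, mem_biUnion] at he
    obtain ⟨T, hTF, hmem⟩ := he
    rw [Finset.mem_powersetCard] at hmem
    exact Finset.card_pos.2 ⟨T, Finset.mem_filter.2 ⟨hTF, hmem.1⟩⟩
  · apply Finset.card_le_card_of_injOn
      (fun T => if h : (T \ ω).Nonempty then (T \ ω).min' h else 0)
    · intro T hT
      rw [hSdef, Finset.mem_coe, Finset.mem_filter] at hT
      obtain ⟨hTF, hsub⟩ := hT
      have hc3 : T.card = 3 := hF.2 T hTF
      have hne : (T \ ω).Nonempty := by
        rw [← Finset.card_pos, Finset.card_sdiff_of_subset hsub, hc3, hω2]; norm_num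
      simp only [dif_pos hne]
      set z := (T \ ω).min' hne with hz
      have hzmem : z ∈ T \ ω := Finset.min'_mem _ _
      rw [Finset.mem_sdiff] at hzmem
      obtain ⟨hzT, hzω⟩ := hzmem
      have hxT : x ∈ T := hsub (by simp [hωdef])
      have hyT : y ∈ T := hsub (by simp [hωdef])
      have hzx : x ≠ z := fun h => hzω (by simp [hωdef, ← h])
      have hzy : y ≠ z := fun h => hzω (by simp [hωdef, ← h])
      have hzv : z ∈ vertsOf F := by
        rw [vertsOf, mem_biUnion]; exact ⟨T, hTF, hzT⟩
      rw [Finset.mem_coe, Finset.mem_inter]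
      constructor
      · rw [nbrs, Finset.mem_filter]; exact ⟨hzv, hzx, T, hTF, hxT, hzT⟩
      · rw [nbrs, Finset.mem_filter]; exact ⟨hzv, hzy, T, hTF, hyT, hzT⟩
    · intro T₁ hT₁ T₂ hT₂ heq
      simp only [hSdef, Finset.coe_filter, Set.mem_setOf_eq] at hT₁ hT₂
      obtain ⟨hTF₁, hsub₁⟩ := hT₁
      obtain ⟨hTF₂, hsub₂⟩ := hT₂
      have hc₁ : T₁.card = 3 := hF.2 T₁ hTF₁
      have hc₂ : T₂.card = 3 := hF.2 T₂ hTF₂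
      have hne₁ : (T₁ \ ω).Nonempty := by
        rw [← Finset.card_pos, Finset.card_sdiff_of_subset hsub₁, hc₁, hω2]; norm_num
      have hne₂ : (T₂ \ ω).Nonempty := by
        rw [← Finset.card_pos, Finset.card_sdiff_of_subset hsub₂, hc₂, hω2]; norm_num
      simp only [] at heq
      rw [dif_pos hne₁, dif_pos hne₂] at heq
      set z := (T₁ \ ω).min' hne₁ with hz
      have hz₁ : z ∈ T₁ \ ω := Finset.min'_mem _ _
      have hz₂ : z ∈ T₂ \ ω := heq ▸ Finset.min'_mem _ _
      rw [Finset.mem_sdiff] at hz₁ hz₂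
      have hcard : (insert z ω).card = 3 := by
        rw [Finset.card_insert_of_notMem hz₁.2, hω2]
      have key : ∀ T : Finset ℕ, T.card = 3 → ω ⊆ T → z ∈ T → T = insert z ω := by
        intro T hc hsub hzT
        refine (Finset.eq_of_subset_of_card_le ?_ ?_).symm
        · exact Finset.insert_subset hzT hsub
        · rw [hc, hcard]
      rw [key T₁ hc₁ hsub₁ hz₁.1, key T₂ hc₂ hsub₂ hz₂.1]

set_option maxHeartbeats 1600000 in
lemma lam_le (F : Finset (Finset ℕ)) (hF : IsTriFam F) (x y : ℕ) (hxy : x ≠ y)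
    (he : ({x, y} : Finset ℕ) ∈ edgesOf F) :
    lam F ≤ ((F.filter fun T => ({x, y} : Finset ℕ) ⊆ T).card : ℝ) + 2 := by
  set ω : Finset ℕ := {x, y} with hωdef
  set S := F.filter fun T => ω ⊆ T with hSdef
  set L := (delta1 F)ᵀ * delta1 F with hLdef
  set e₀ : {e // e ∈ edgesOf F} := ⟨ω, he⟩ with he₀
  set u : {e // e ∈ edgesOf F} → ℝ := Pi.single e₀ 1 with hu
  have hω2 : ω.card = 2 := card_pair hxy
  have habsω : ∀ T ∈ F, |triSign T ω| = if ω ⊆ T then 1 else 0 := by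
    intro T hT
    rw [abs_triSign']
    by_cases h : ω ⊆ T
    · rw [if_pos ⟨h, hω2, hF.2 T hT⟩, if_pos h]
    · rw [if_neg (fun hx => h hx.1), if_neg h]
  have htsum : ∑ T ∈ F, triSign T ω * triSign T ω = (S.card : ℝ) := by
    calc ∑ T ∈ F, triSign T ω * triSign T ω
        = ∑ T ∈ F, if ω ⊆ T then (1:ℝ) else 0 := by
          refine Finset.sum_congr rfl fun T hT => ?_
          rw [← abs_mul_abs_self, habsω T hT]
          by_cases h : ω ⊆ T <;> simp [h]
      _ = (S.card : ℝ) := Finset.sum_boole _ _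
  have hdiag : L e₀ e₀ = (S.card : ℝ) := by
    rw [hLdef, entry_eq]; exact htsum
  have hone : u ⬝ᵥ L.mulVec u = (S.card : ℝ) := by
    rw [hu, Matrix.mulVec_single, single_dotProduct]
    simpa using hdiag
  have hLabs : ∀ e' : {e // e ∈ edgesOf F},
      |L e' e₀| ≤ ∑ T ∈ F, |triSign T e'.1| * |triSign T ω| := by
    intro e'
    rw [hLdef, entry_eq]
    refine (Finset.abs_sum_le_sum_abs _ _).trans (le_of_eq ?_)
    exact Finset.sum_congr rfl fun T _ => abs_mul _ _
  have hD1 : ∀ e' : {e // e ∈ edgesOf F}, e' ≠ e₀ →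
      (∑ T ∈ F, |triSign T e'.1| * |triSign T ω|) ≤ 1 := by
    intro e' hne
    have he2 : e'.1.card = 2 := edge_card2 F e'.2
    have hneω : e'.1 ≠ ω := fun h => hne (Subtype.ext h)
    calc ∑ T ∈ F, |triSign T e'.1| * |triSign T ω|
        = ∑ T ∈ F, if ω ⊆ T ∧ e'.1 ⊆ T then (1:ℝ) else 0 := by
          refine Finset.sum_congr rfl fun T hT => ?_
          rw [abs_triSign', habsω T hT]
          by_cases h1 : ω ⊆ T <;> by_cases h2 : e'.1 ⊆ T <;>
            simp [h1, h2, he2, hF.2 T hT]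
      _ = ((F.filter fun T => ω ⊆ T ∧ e'.1 ⊆ T).card : ℝ) := Finset.sum_boole _ _
      _ ≤ 1 := by
          have hle : (F.filter fun T => ω ⊆ T ∧ e'.1 ⊆ T).card ≤ 1 := by
            rw [Finset.card_le_one]
            intro a ha b hb
            rw [Finset.mem_filter] at ha hb
            have key : ∀ T ∈ F, ω ⊆ T → e'.1 ⊆ T → T = ω ∪ e'.1 := by
              intro T hTF hsub1 hsub2
              have hc3 : T.card = 3 := hF.2 T hTF
              have hnsub : ¬ e'.1 ⊆ ω := by
                intro h
                exact hneω (Finset.eq_of_subset_of_card_le h (by rw [hω2, he2]))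
              obtain ⟨z, hz1, hz2⟩ := Finset.not_subset.1 hnsub
              have h3 : 3 ≤ (ω ∪ e'.1).card := by
                have hins : insert z ω ⊆ ω ∪ e'.1 :=
                  Finset.insert_subset (Finset.mem_union_right _ hz1)
                    Finset.subset_union_left
                calc 3 = (insert z ω).card := by
                      rw [Finset.card_insert_of_notMem hz2, hω2]
                  _ ≤ _ := Finset.card_le_card hins
              exact (Finset.eq_of_subset_of_card_le
                (Finset.union_subset hsub1 hsub2) (by rw [hc3]; exact h3)).symm
            rw [key a ha.1 ha.2.1 ha.2.2, key b hb.1 hb.2.1 hb.2.2]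
          exact_mod_cast hle
  have hDsum : ∑ e' ∈ Finset.univ.erase e₀,
      (∑ T ∈ F, |triSign T e'.1| * |triSign T ω|) ≤ 2 * (S.card : ℝ) := by
    rw [Finset.sum_comm]
    calc ∑ T ∈ F, ∑ e' ∈ Finset.univ.erase e₀, |triSign T e'.1| * |triSign T ω|
        ≤ ∑ T ∈ F, if ω ⊆ T then (2:ℝ) else 0 := by
          refine Finset.sum_le_sum fun T hT => ?_
          by_cases hsub : ω ⊆ T
          · have ha : |triSign T ω| = 1 := by rw [habsω T hT, if_pos hsub]
            rw [if_pos hsub]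
            have hsumall : ∑ e' : {e // e ∈ edgesOf F}, |triSign T e'.1| = 3 :=
              sum_abs_triSign F hF hT
            have herase := Finset.add_sum_erase Finset.univ
              (fun e' : {e // e ∈ edgesOf F} => |triSign T e'.1|) (Finset.mem_univ e₀)
            have he₀v : |triSign T (e₀ : {e // e ∈ edgesOf F}).1| = 1 := ha
            calc ∑ e' ∈ Finset.univ.erase e₀, |triSign T e'.1| * |triSign T ω|
                = ∑ e' ∈ Finset.univ.erase e₀, |triSign T e'.1| := by
                  refine Finset.sum_congr rfl fun e' _ => ?_
                  rw [ha, mul_one]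
              _ ≤ 2 := by
                  have : |triSign T (e₀ : {e // e ∈ edgesOf F}).1|
                      + ∑ e' ∈ Finset.univ.erase e₀, |triSign T e'.1| = 3 := by
                    rw [herase]; exact hsumall
                  linarith [this, he₀v]
          · have ha : |triSign T ω| = 0 := by rw [habsω T hT, if_neg hsub]
            rw [if_neg hsub]
            refine le_of_eq ?_
            refine Finset.sum_eq_zero fun e' _ => ?_
            rw [ha, mul_zero]
      _ = 2 * (S.card : ℝ) := by
          rw [← Finset.sum_boole, Finset.mul_sum]
          refine Finset.sum_congr rfl fun T hT => ?_
          by_cases h : ω ⊆ T <;> simp [h]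
  have hBB : L.mulVec u ⬝ᵥ L.mulVec u ≤ (S.card : ℝ) * ((S.card : ℝ) + 2) := by
    have hexp : L.mulVec u ⬝ᵥ L.mulVec u = ∑ e' : {e // e ∈ edgesOf F}, (L e' e₀)^2 := by
      rw [hu, Matrix.mulVec_single]
      simp [dotProduct, sq, Matrix.col]
    rw [hexp, ← Finset.add_sum_erase _ _ (Finset.mem_univ e₀)]
    have h2 : ∑ e' ∈ Finset.univ.erase e₀, (L e' e₀)^2 ≤ 2 * (S.card : ℝ) := by
      refine le_trans (Finset.sum_le_sum fun e' he' => ?_) hDsum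
      have hne := Finset.ne_of_mem_erase he'
      have ha := hLabs e'
      have hb := hD1 e' hne
      nlinarith [sq_abs (L e' e₀), abs_nonneg (L e' e₀)]
    rw [hdiag]
    nlinarith [h2]
  have h1le : 1 ≤ S.card := (tcard F hF x y hxy he).1
  have htpos : (0:ℝ) < (S.card : ℝ) := by exact_mod_cast h1le
  have hPSD : L.PosSemidef := by
    have h := Matrix.posSemidef_conjTranspose_mul_self (delta1 F)
    rwa [Matrix.conjTranspose_eq_transpose_of_trivial] at h
  obtain ⟨μ, hμpos, hμv, hμle⟩ :=
    exists_pos_eigen_le' L hPSD u (S.card : ℝ) htpos hone hBB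
  have hinf : lam F ≤ μ := by
    unfold lam lambdaMinPos
    exact csInf_le ⟨0, fun r hr => hr.1.le⟩ ⟨hμpos, hμv⟩
  linarith

/-- If `n ≤ ⌈λ(𝒯)⌉`, then for every edge `{x,y}` of the support graph `Γ₀(𝒯)`, the
vertices `x` and `y` have at least `n - 2` common neighbors in `Γ₀(𝒯)`. -/
theorem stmt2 (F : Finset (Finset ℕ)) (hF : IsTriFam F) (n : ℕ) (hn : 1 ≤ n)
    (hlam : (n : ℤ) ≤ ⌈lam F⌉) :
    ∀ x y : ℕ, x ≠ y → ({x, y} : Finset ℕ) ∈ edgesOf F →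
      (n : ℤ) - 2 ≤ ((nbrs F x ∩ nbrs F y).card : ℤ) := by
  intro x y hxy he
  have h1 := lam_le F hF x y hxy he
  have h2 := (tcard F hF x y hxy he).2
  have h3 : lam F ≤ ((nbrs F x ∩ nbrs F y).card : ℝ) + 2 := by
    have := (Nat.cast_le (α := ℝ)).2 h2
    linarith
  have h4 : ⌈lam F⌉ ≤ ((nbrs F x ∩ nbrs F y).card : ℤ) + 2 := by
    apply Int.ceil_le.2
    push_cast
    linarith
  linarith
end

section
/- Let 𝒯 be a triangle family and let n be a positive integer with n ≤ ⌈λ(𝒯)⌉. Then every vertex x of the support graph G = Γ₀(𝒯) is contained in at least n − 2 triples of 𝒯 and has degree d_G(x) ≥ n − 1 in G. Consequently, the minimum degree of Γ₀(𝒯) is at least n − 1 and |V(Γ₀(𝒯))| ≥ n. -/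
open Finset Matrix

lemma dot_eq_inner_s3 {m : Type*} [Fintype m] (x y : m → ℝ) :
    x ⬝ᵥ y = @inner ℝ (EuclideanSpace ℝ m) _ (WithLp.toLp 2 x) (WithLp.toLp 2 y) := by
  simp [dotProduct, PiLp.inner_apply, RCLike.inner_apply, mul_comm]

lemma exists_small_pos_eigen {m : Type*} [Fintype m] [DecidableEq m]
    (A : Matrix m m ℝ) (hA : A.IsHermitian) (C : ℝ) (hC : 0 ≤ C) (u : m → ℝ)
    (h1 : 0 < u ⬝ᵥ A *ᵥ u) (h2 : (A *ᵥ u) ⬝ᵥ (A *ᵥ u) ≤ C * (u ⬝ᵥ A *ᵥ u)) :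
    ∃ μ : ℝ, (0 < μ ∧ ∃ v : m → ℝ, v ≠ 0 ∧ A *ᵥ v = μ • v) ∧ μ ≤ C := by
  suffices h : ∃ i, 0 < hA.eigenvalues i ∧ hA.eigenvalues i ≤ C by
    obtain ⟨i, hpos, hle⟩ := h
    exact ⟨hA.eigenvalues i, ⟨hpos, hA.eigenvectorBasis i,
      fun h => hA.eigenvectorBasis.orthonormal.ne_zero i (by rw [← WithLp.toLp_ofLp (x := hA.eigenvectorBasis i), h]; rfl), hA.mulVec_eigenvectorBasis i⟩, hle⟩
  by_contra hcon
  push_neg at hcon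
  set B := hA.eigenvectorBasis with hB
  set μ := hA.eigenvalues with hμ
  have hAT : Aᵀ = A := by
    rw [← Matrix.conjTranspose_eq_transpose_of_trivial]; exact hA
  have hrepr : ∀ i, B.repr (WithLp.toLp 2 (A *ᵥ u)) i = μ i * B.repr (WithLp.toLp 2 u) i := by
    intro i
    rw [B.repr_apply_apply, B.repr_apply_apply, ← WithLp.toLp_ofLp (x := B i), ← dot_eq_inner_s3, ← dot_eq_inner_s3]
    have h' : (B i : m → ℝ) ⬝ᵥ (A *ᵥ u) = (A *ᵥ (B i : m → ℝ)) ⬝ᵥ u := by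
      rw [Matrix.dotProduct_mulVec, ← Matrix.vecMul_transpose, hAT]
    have hmv : A *ᵥ (B i : m → ℝ) = μ i • (B i : m → ℝ) := hA.mulVec_eigenvectorBasis i
    rw [h', hmv, smul_dotProduct]
    rfl
  have key1 : u ⬝ᵥ A *ᵥ u = ∑ i, μ i * (B.repr (WithLp.toLp 2 u) i) ^ 2 := by
    rw [dot_eq_inner_s3,
      ← (B.repr).inner_map_map (WithLp.toLp 2 u) (WithLp.toLp 2 (A *ᵥ u)),
      PiLp.inner_apply]
    simp only [RCLike.inner_apply, starRingEnd_apply, star_trivial]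
    exact Finset.sum_congr rfl fun i _ => by rw [hrepr i]; ring
  have key2 : (A *ᵥ u) ⬝ᵥ (A *ᵥ u) = ∑ i, (μ i)^2 * (B.repr (WithLp.toLp 2 u) i) ^ 2 := by
    rw [dot_eq_inner_s3,
      ← (B.repr).inner_map_map (WithLp.toLp 2 (A *ᵥ u)) (WithLp.toLp 2 (A *ᵥ u)),
      PiLp.inner_apply]
    simp only [RCLike.inner_apply, starRingEnd_apply, star_trivial]
    exact Finset.sum_congr rfl fun i _ => by rw [hrepr i]; ring
  rw [key1] at h1 h2
  rw [key2] at h2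
  set c : m → ℝ := fun i => B.repr (WithLp.toLp 2 u) i with hc
  have hpt : ∀ i ∈ Finset.univ (α := m), C * (μ i * c i ^ 2) ≤ (μ i)^2 * c i ^ 2 := by
    intro i _
    rcases le_or_gt (μ i) 0 with h | h
    · have h' : μ i * c i ^ 2 ≤ 0 := mul_nonpos_of_nonpos_of_nonneg h (sq_nonneg _)
      nlinarith [sq_nonneg (μ i * c i)]
    · have hCμ : C < μ i := hcon i h
      have hnn : 0 ≤ μ i * c i ^ 2 := mul_nonneg h.le (sq_nonneg _)
      calc C * (μ i * c i ^ 2) ≤ μ i * (μ i * c i ^ 2) :=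
             mul_le_mul_of_nonneg_right hCμ.le hnn
        _ = (μ i)^2 * c i ^ 2 := by ring
  obtain ⟨i0, hi0mem, hi0⟩ : ∃ i ∈ Finset.univ (α := m), 0 < μ i * c i ^ 2 := by
    by_contra hall
    push_neg at hall
    have : ∑ i, μ i * c i ^ 2 ≤ 0 := Finset.sum_nonpos fun i hi => hall i hi
    linarith
  have hμpos : 0 < μ i0 := by
    by_contra hneg
    push_neg at hneg
    nlinarith [sq_nonneg (c i0)]
  have hCμ : C < μ i0 := hcon i0 hμpos
  have hcpos : 0 < c i0 ^ 2 := by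
    rcases lt_or_eq_of_le (sq_nonneg (c i0)) with h | h
    · exact h
    · exfalso; rw [← h] at hi0; simp at hi0
  have hstrict : C * (μ i0 * c i0 ^ 2) < (μ i0)^2 * c i0 ^ 2 := by nlinarith
  have hlt : ∑ i, C * (μ i * c i ^ 2) < ∑ i, (μ i)^2 * c i ^ 2 :=
    Finset.sum_lt_sum hpt ⟨i0, hi0mem, hstrict⟩
  rw [← Finset.mul_sum] at hlt
  linarith

lemma triSign_pm {T e : Finset ℕ} (h1 : e ⊆ T) (h2 : e.card = 2) (h3 : T.card = 3) :
    triSign T e = 1 ∨ triSign T e = -1 := by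
  unfold triSign; rw [if_pos ⟨h1, h2, h3⟩]; split <;> simp

lemma triSign_zero {T e : Finset ℕ} (h : ¬ e ⊆ T) : triSign T e = 0 := by
  unfold triSign; rw [if_neg (by tauto)]

lemma edge_card {F : Finset (Finset ℕ)} {e : Finset ℕ} (he : e ∈ edgesOf F) : e.card = 2 := by
  rw [edgesOf, Finset.mem_biUnion] at he
  obtain ⟨T, -, hT⟩ := he
  exact (Finset.mem_powersetCard.mp hT).2

/-- key per-vertex lemma -/
lemma key_lemma (F : Finset (Finset ℕ)) (hF : IsTriFam F) {x : ℕ} (hx : x ∈ vertsOf F) :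
    ∃ m : ℕ, 0 < m ∧ lam F ≤ m + 2 ∧
      m ≤ (F.filter fun T => x ∈ T).card ∧ m + 1 ≤ (nbrs F x).card := by
  classical
  obtain ⟨T₀, hT₀F, hxT₀⟩ := Finset.mem_biUnion.mp hx
  simp only [id] at hxT₀
  have hT₀card : T₀.card = 3 := hF.2 _ hT₀F
  have herase : (T₀.erase x).Nonempty := by
    rw [← Finset.card_pos, Finset.card_erase_of_mem hxT₀, hT₀card]; norm_num
  obtain ⟨y₀, hy₀⟩ := herase
  have hy₀x : y₀ ≠ x := (Finset.mem_erase.mp hy₀).1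
  have hy₀T₀ : y₀ ∈ T₀ := (Finset.mem_erase.mp hy₀).2
  set e₀ : Finset ℕ := insert x {y₀} with he₀def
  have hxe₀ : x ∈ e₀ := Finset.mem_insert_self _ _
  have hy₀e₀ : y₀ ∈ e₀ := by simp [he₀def]
  have he₀card : e₀.card = 2 := by
    rw [he₀def, Finset.card_insert_of_notMem (by simp [hy₀x.symm]), Finset.card_singleton]
  have he₀sub : e₀ ⊆ T₀ := by
    rw [he₀def]; exact Finset.insert_subset hxT₀ (Finset.singleton_subset_iff.mpr hy₀T₀)
  have he₀E : e₀ ∈ edgesOf F :=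
    Finset.mem_biUnion.mpr ⟨T₀, hT₀F, Finset.mem_powersetCard.mpr ⟨he₀sub, he₀card⟩⟩
  set Fe : Finset (Finset ℕ) := F.filter (fun T => e₀ ⊆ T) with hFe
  set m : ℕ := Fe.card with hm
  have hmpos : 0 < m := Finset.card_pos.mpr ⟨T₀, Finset.mem_filter.mpr ⟨hT₀F, he₀sub⟩⟩
  -- the matrix
  set A : Matrix {e // e ∈ edgesOf F} {e // e ∈ edgesOf F} ℝ := (delta1 F)ᵀ * delta1 F with hA
  have hAH : A.IsHermitian := by
    have h := Matrix.isHermitian_conjTranspose_mul_self (delta1 F)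
    rwa [Matrix.conjTranspose_eq_transpose_of_trivial] at h
  set j : {e // e ∈ edgesOf F} := ⟨e₀, he₀E⟩ with hj
  set u : {e // e ∈ edgesOf F} → ℝ := Pi.single j 1 with hu
  have hAapp : ∀ i : {e // e ∈ edgesOf F},
      A i j = ∑ T ∈ F, triSign T i.1 * triSign T e₀ := by
    intro i
    rw [hA, Matrix.mul_apply]
    simp only [Matrix.transpose_apply, delta1, Matrix.of_apply]
    rw [Finset.univ_eq_attach, Finset.sum_attach F (fun T => triSign T i.1 * triSign T e₀)]
  have hdiag : A j j = (m : ℝ) := by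
    rw [hAapp]
    have : ∀ T ∈ F, triSign T e₀ * triSign T e₀ = if e₀ ⊆ T then (1:ℝ) else 0 := by
      intro T hT
      by_cases h : e₀ ⊆ T
      · rcases triSign_pm h he₀card (hF.2 T hT) with h' | h' <;> rw [h', if_pos h] <;> norm_num
      · rw [triSign_zero h, if_neg h]; ring
    rw [Finset.sum_congr rfl this, Finset.sum_boole]
  have hmv : A *ᵥ u = fun i => A i j := by
    rw [hu, Matrix.mulVec_single]
    funext i; simp
  have hquad : u ⬝ᵥ A *ᵥ u = (m : ℝ) := by
    rw [hmv, hu, single_dotProduct, one_mul, hdiag]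
  -- off-diagonal bounds
  have hfil_card : ∀ e : Finset ℕ, e ≠ e₀ → e.card = 2 →
      (F.filter fun T => e ⊆ T ∧ e₀ ⊆ T).card ≤ 1 := by
    intro e hne he2
    refine Finset.card_le_one.mpr fun T hT T' hT' => ?_
    rw [Finset.mem_filter] at hT hT'
    have hcup : ∀ S ∈ F, e ⊆ S → e₀ ⊆ S → S = e ∪ e₀ := by
      intro S hS h1 h2
      have hsub : e ∪ e₀ ⊆ S := Finset.union_subset h1 h2
      have hge : 3 ≤ (e ∪ e₀).card := by
        by_contra hlt
        push_neg at hlt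
        have h3 : e₀ = e ∪ e₀ :=
          Finset.eq_of_subset_of_card_le Finset.subset_union_right (by omega)
        have : e ⊆ e₀ := by rw [h3]; exact Finset.subset_union_left
        exact hne (Finset.eq_of_subset_of_card_le this (by omega))
      exact (Finset.eq_of_subset_of_card_le hsub (by rw [hF.2 S hS]; omega)).symm
    rw [hcup T hT.1 hT.2.1 hT.2.2, hcup T' hT'.1 hT'.2.1 hT'.2.2]
  have hoff : ∀ i : {e // e ∈ edgesOf F}, i ≠ j →
      |A i j| ≤ 1 ∧ (A i j ≠ 0 → ∃ T ∈ F, i.1 ⊆ T ∧ e₀ ⊆ T) := by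
    intro i hij
    have hne : i.1 ≠ e₀ := fun h => hij (Subtype.ext h)
    have hsumf : A i j = ∑ T ∈ F.filter (fun T => i.1 ⊆ T ∧ e₀ ⊆ T),
        triSign T i.1 * triSign T e₀ := by
      rw [hAapp, Finset.sum_filter_of_ne]
      intro T hT h0
      constructor
      · by_contra hc
        rw [triSign_zero hc, zero_mul] at h0; exact h0 rfl
      · by_contra hc
        rw [triSign_zero hc, mul_zero] at h0; exact h0 rfl
    constructor
    · rw [hsumf]
      calc |∑ T ∈ F.filter (fun T => i.1 ⊆ T ∧ e₀ ⊆ T), triSign T i.1 * triSign T e₀|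
          ≤ ∑ T ∈ F.filter (fun T => i.1 ⊆ T ∧ e₀ ⊆ T), |triSign T i.1 * triSign T e₀| :=
            Finset.abs_sum_le_sum_abs _ _
        _ ≤ ∑ T ∈ F.filter (fun T => i.1 ⊆ T ∧ e₀ ⊆ T), 1 := by
            refine Finset.sum_le_sum fun T hT => ?_
            rw [Finset.mem_filter] at hT
            rcases triSign_pm hT.2.1 (edge_card i.2) (hF.2 T hT.1) with h' | h' <;>
              rcases triSign_pm hT.2.2 he₀card (hF.2 T hT.1) with h'' | h'' <;>
              rw [h', h''] <;> norm_num
        _ ≤ 1 := by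
            rw [Finset.sum_const, nsmul_eq_mul, mul_one]
            exact_mod_cast hfil_card i.1 hne (edge_card i.2)
    · intro h0
      by_contra hc
      push_neg at hc
      rw [hsumf] at h0
      have : F.filter (fun T => i.1 ⊆ T ∧ e₀ ⊆ T) = ∅ := by
        rw [Finset.filter_eq_empty_iff]
        intro T hT hcc
        exact absurd hcc.2 (by intro h'; exact absurd h' (by
          have := hc T hT hcc.1; exact this))
      rw [this, Finset.sum_empty] at h0
      exact h0 rfl
  -- sum of squares bound
  have hsumsq : (A *ᵥ u) ⬝ᵥ (A *ᵥ u) ≤ ((m:ℝ) + 2) * (m:ℝ) := by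
    have hdp : (A *ᵥ u) ⬝ᵥ (A *ᵥ u) = ∑ i, (A i j)^2 := by
      rw [hmv, dotProduct]
      exact Finset.sum_congr rfl fun i _ => (sq (A i j)).symm
    rw [hdp]
    have hsplit : ∑ i, (A i j)^2 = (A j j)^2 + ∑ i ∈ Finset.univ.erase j, (A i j)^2 :=
      (Finset.add_sum_erase _ _ (Finset.mem_univ j)).symm
    rw [hsplit, hdiag]
    have hrest : ∑ i ∈ Finset.univ.erase j, (A i j)^2 ≤ 2 * (m:ℝ) := by
      set S := (Finset.univ.erase j).filter (fun i => A i j ≠ 0) with hS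
      have h1' : ∑ i ∈ Finset.univ.erase j, (A i j)^2
          ≤ ∑ i ∈ Finset.univ.erase j, (if A i j ≠ 0 then (1:ℝ) else 0) := by
        refine Finset.sum_le_sum fun i hi => ?_
        by_cases h : A i j = 0
        · simp [h]
        · rw [if_pos h]
          have := (hoff i (Finset.mem_erase.mp hi).1).1
          nlinarith [abs_nonneg (A i j), sq_abs (A i j)]
      have h2' : ∑ i ∈ Finset.univ.erase j, (if A i j ≠ 0 then (1:ℝ) else 0) = (S.card : ℝ) := by
        rw [hS, Finset.sum_boole]
      have h3' : S.card ≤ 2 * m := by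
        have hinj : S.card ≤ (Fe.biUnion fun T => (T.powersetCard 2).erase e₀).card := by
          refine Finset.card_le_card_of_injOn (fun i => i.1) ?_ ?_
          · intro i hi
            rw [hS, Finset.mem_coe, Finset.mem_filter, Finset.mem_erase] at hi
            obtain ⟨⟨hij, -⟩, hne0⟩ := hi
            obtain ⟨T, hTF, hiT, he₀T⟩ := (hoff i hij).2 hne0
            refine Finset.mem_biUnion.mpr ⟨T, Finset.mem_filter.mpr ⟨hTF, he₀T⟩, ?_⟩
            refine Finset.mem_erase.mpr ⟨fun h => hij (Subtype.ext h), ?_⟩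
            exact Finset.mem_powersetCard.mpr ⟨hiT, edge_card i.2⟩
          · exact fun a _ b _ h => Subtype.ext h
        have hbu : (Fe.biUnion fun T => (T.powersetCard 2).erase e₀).card ≤ 2 * m := by
          calc (Fe.biUnion fun T => (T.powersetCard 2).erase e₀).card
              ≤ ∑ T ∈ Fe, ((T.powersetCard 2).erase e₀).card := Finset.card_biUnion_le
            _ ≤ ∑ _T ∈ Fe, 2 := by
                refine Finset.sum_le_sum fun T hT => ?_
                rw [Finset.mem_filter] at hT
                have hmem : e₀ ∈ T.powersetCard 2 :=
                  Finset.mem_powersetCard.mpr ⟨hT.2, he₀card⟩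
                rw [Finset.card_erase_of_mem hmem, Finset.card_powersetCard,
                  hF.2 T hT.1]
                decide
            _ = 2 * m := by rw [Finset.sum_const, hm]; ring
        omega
      rw [h2'] at h1'
      calc ∑ i ∈ Finset.univ.erase j, (A i j)^2 ≤ (S.card : ℝ) := h1'
        _ ≤ 2 * (m:ℝ) := by exact_mod_cast h3'
    nlinarith [hrest]
  -- apply the eigenvalue lemma
  have hupos : 0 < u ⬝ᵥ A *ᵥ u := by rw [hquad]; exact_mod_cast hmpos
  obtain ⟨μ, hμmem, hμle⟩ := exists_small_pos_eigen A hAH ((m:ℝ) + 2) (by positivity) u hupos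
    (by rw [hquad]; exact hsumsq)
  have hlamle : lam F ≤ (m:ℝ) + 2 := by
    have hbdd : BddBelow {μ : ℝ | 0 < μ ∧ ∃ v, v ≠ 0 ∧ A *ᵥ v = μ • v} :=
      ⟨0, fun z hz => hz.1.le⟩
    exact le_trans (csInf_le hbdd hμmem) hμle
  refine ⟨m, hmpos, hlamle, ?_, ?_⟩
  · refine Finset.card_le_card fun T hT => ?_
    rw [Finset.mem_filter] at hT ⊢
    exact ⟨hT.1, hT.2 hxe₀⟩
  · -- degree bound
    have hy₀nbr : y₀ ∈ nbrs F x := by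
      rw [nbrs, Finset.mem_filter]
      exact ⟨Finset.mem_biUnion.mpr ⟨T₀, hT₀F, hy₀T₀⟩, hy₀x.symm, T₀, hT₀F, hxT₀, hy₀T₀⟩
    have hthird : ∀ T ∈ Fe, ∃ z, T \ e₀ = {z} ∧ (T \ e₀).sum id = z ∧ T = insert z e₀ := by
      intro T hT
      rw [Finset.mem_filter] at hT
      have hcard : (T \ e₀).card = 1 := by
        rw [Finset.card_sdiff_of_subset hT.2, hF.2 T hT.1, he₀card]
      obtain ⟨z, hz⟩ := Finset.card_eq_one.mp hcard
      refine ⟨z, hz, by rw [hz]; simp, ?_⟩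
      have := Finset.union_sdiff_of_subset hT.2
      rw [hz] at this
      rw [← this, Finset.union_comm]
      ext a; simp [or_comm]
    have hcle : Fe.card ≤ ((nbrs F x).erase y₀).card := by
      refine Finset.card_le_card_of_injOn (fun T => (T \ e₀).sum id) ?_ ?_
      · intro T hT
        obtain ⟨z, hz1, hz2, hz3⟩ := hthird T hT
        show (T \ e₀).sum id ∈ (nbrs F x).erase y₀
        rw [hz2]
        have hzT : z ∈ T \ e₀ := by rw [hz1]; exact Finset.mem_singleton_self z
        rw [Finset.mem_sdiff] at hzT
        have hzx : z ≠ x := fun h => hzT.2 (h ▸ hxe₀)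
        have hzy : z ≠ y₀ := fun h => hzT.2 (h ▸ hy₀e₀)
        rw [Finset.mem_coe, Finset.mem_filter] at hT
        refine Finset.mem_erase.mpr ⟨hzy, ?_⟩
        rw [nbrs, Finset.mem_filter]
        exact ⟨Finset.mem_biUnion.mpr ⟨T, hT.1, hzT.1⟩, hzx.symm, T, hT.1, hT.2 hxe₀, hzT.1⟩
      · intro T hT T' hT' heq
        obtain ⟨z, hz1, hz2, hz3⟩ := hthird T hT
        obtain ⟨z', hz1', hz2', hz3'⟩ := hthird T' hT'
        have heq' : (T \ e₀).sum id = (T' \ e₀).sum id := heq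
        rw [hz2, hz2'] at heq'

        have heq := heq'
        rw [hz3, hz3', heq]
    have := Finset.card_erase_of_mem hy₀nbr
    have hpos : 0 < (nbrs F x).card := Finset.card_pos.mpr ⟨y₀, hy₀nbr⟩
    omega

/-- If `n ≤ ⌈λ(𝒯)⌉`, then every vertex of the support graph lies in at least `n - 2`
triples of `𝒯` and has degree at least `n - 1`; consequently the minimum degree of
`Γ₀(𝒯)` is at least `n - 1` and `Γ₀(𝒯)` has at least `n` vertices. -/
theorem stmt3 (F : Finset (Finset ℕ)) (hF : IsTriFam F) (n : ℕ) (hn : 1 ≤ n)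
    (hlam : (n : ℤ) ≤ ⌈lam F⌉) :
    (∀ x ∈ vertsOf F,
      (n : ℤ) - 2 ≤ ((F.filter fun T => x ∈ T).card : ℤ) ∧
      (n : ℤ) - 1 ≤ ((nbrs F x).card : ℤ)) ∧
    (n : ℤ) ≤ ((vertsOf F).card : ℤ) := by
  have hreal : ((n : ℤ) - 1 : ℝ) < lam F := by
    have h1 : ((n : ℤ) - 1 : ℤ) < ⌈lam F⌉ := by omega
    exact_mod_cast Int.lt_ceil.mp h1
  have hmain : ∀ x ∈ vertsOf F,
      (n : ℤ) - 2 ≤ ((F.filter fun T => x ∈ T).card : ℤ) ∧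
      (n : ℤ) - 1 ≤ ((nbrs F x).card : ℤ) := by
    intro x hx
    obtain ⟨m, hmpos, hlamle, hfil, hdeg⟩ := key_lemma F hF hx
    have hnm : (n : ℤ) ≤ (m : ℤ) + 2 := by
      have h := lt_of_lt_of_le hreal hlamle
      push_cast at h
      have h2 : (n : ℝ) < (m : ℝ) + 3 := by linarith
      have h3 : n < m + 3 := by exact_mod_cast h2
      omega
    have h3 : (m : ℤ) ≤ ((F.filter fun T => x ∈ T).card : ℤ) := by exact_mod_cast hfil
    have h4 : (m : ℤ) + 1 ≤ ((nbrs F x).card : ℤ) := by exact_mod_cast hdeg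
    omega
  refine ⟨hmain, ?_⟩
  obtain ⟨T₁, hT₁⟩ := hF.1
  have hT₁card : T₁.card = 3 := hF.2 _ hT₁
  have : T₁.Nonempty := by rw [← Finset.card_pos, hT₁card]; norm_num
  obtain ⟨x₁, hx₁⟩ := this
  have hx₁v : x₁ ∈ vertsOf F := Finset.mem_biUnion.mpr ⟨T₁, hT₁, hx₁⟩
  have hdeg := (hmain x₁ hx₁v).2
  have hnotmem : x₁ ∉ nbrs F x₁ := by
    rw [nbrs, Finset.mem_filter]
    rintro ⟨-, h, -⟩
    exact h rfl
  have hsub : insert x₁ (nbrs F x₁) ⊆ vertsOf F := by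
    refine Finset.insert_subset hx₁v ?_
    rw [nbrs]; exact Finset.filter_subset _ _
  have hcard : (nbrs F x₁).card + 1 ≤ (vertsOf F).card := by
    have := Finset.card_le_card hsub
    rwa [Finset.card_insert_of_notMem hnotmem] at this
  have : ((nbrs F x₁).card : ℤ) + 1 ≤ ((vertsOf F).card : ℤ) := by exact_mod_cast hcard
  omega
end

section
/- Let n ≥ 3 be an integer and let 𝒯 be a triangle family with |𝒯| < C(n,3). Then λ(𝒯) ≤ n − 1. -/
open Finset Matrix

namespace Stmt5Aux


def edeg (F : Finset (Finset ℕ)) (e : Finset ℕ) : ℕ := (F.filter fun T => e ⊆ T).card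

lemma choose2 (d : ℕ) : 2 * (d + 1).choose 2 = (d + 1) * d := by
  induction d with
  | zero => rfl
  | succ k ih =>
    rw [show k + 1 + 1 = (k + 1) + 1 from rfl, Nat.choose_succ_succ (k + 1) 1,
      Nat.choose_one_right, Nat.mul_add]
    nlinarith [ih]

lemma choose3 (d : ℕ) : 6 * (d + 2).choose 3 = (d + 2) * (d + 1) * d := by
  induction d with
  | zero => rfl
  | succ k ih =>
    rw [show k + 1 + 2 = (k + 2) + 1 from rfl, Nat.choose_succ_succ (k + 2) 2, Nat.mul_add]
    have h2 := choose2 (k + 1)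
    nlinarith [ih, h2]

lemma sum_card_filter_mem {V : Finset ℕ} {S : Finset (Finset ℕ)} (h : ∀ T ∈ S, T ⊆ V) :
    ∑ v ∈ V, (S.filter fun T => v ∈ T).card = ∑ T ∈ S, T.card := by
  simp only [Finset.card_filter]
  rw [Finset.sum_comm]
  refine Finset.sum_congr rfl fun T hT => ?_
  rw [← Finset.card_filter, Finset.filter_mem_eq_inter, Finset.inter_eq_right.2 (h T hT)]

lemma subset_verts {F : Finset (Finset ℕ)} {T : Finset ℕ} (hT : T ∈ F) : T ⊆ vertsOf F :=
  fun x hx => Finset.mem_biUnion.2 ⟨T, hT, hx⟩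

lemma card_two_ne {e f : Finset ℕ} (he : e.card = 2) (hf : f.card = 2) (hne : f ≠ e) :
    3 ≤ (e ∪ f).card := by
  have hsub : ¬ f ⊆ e := by
    intro hsub
    exact hne (Finset.eq_of_subset_of_card_le hsub (by omega))
  obtain ⟨x, hxf, hxe⟩ := Finset.not_subset.1 hsub
  have : insert x e ⊆ e ∪ f := by
    intro y hy
    rcases Finset.mem_insert.1 hy with rfl | hy
    · exact Finset.mem_union_right _ hxf
    · exact Finset.mem_union_left _ hy
  calc 3 = (insert x e).card := by rw [Finset.card_insert_of_notMem hxe, he]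
  _ ≤ _ := Finset.card_le_card this

lemma link {F : Finset (Finset ℕ)} (htri : ∀ T ∈ F, T.card = 3) {d : ℕ}
    (hd : ∀ e ∈ edgesOf F, d ≤ edeg F e) {v : ℕ} (hv : v ∈ vertsOf F) :
    d + 2 ≤ (vertsOf F).card ∧ d * (d + 1) ≤ 2 * (F.filter fun T => v ∈ T).card := by
  classical
  set Fv : Finset (Finset ℕ) := F.filter fun T => v ∈ T with hFv
  set L : Finset (Finset ℕ) := Fv.image fun T => T.erase v with hL
  have hinj : ∀ T ∈ Fv, ∀ T' ∈ Fv, T.erase v = T'.erase v → T = T' := by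
    intro T hT T' hT' h
    have h1 : v ∈ T := (Finset.mem_filter.1 hT).2
    have h2 : v ∈ T' := (Finset.mem_filter.1 hT').2
    rw [← Finset.insert_erase h1, h, Finset.insert_erase h2]
  have hLcard : L.card = Fv.card := Finset.card_image_of_injOn hinj
  have hLmem : ∀ l ∈ L, l.card = 2 ∧ v ∉ l ∧ insert v l ∈ F ∧ l ⊆ vertsOf F := by
    intro l hl
    obtain ⟨T, hT, rfl⟩ := Finset.mem_image.1 hl
    have hTF : T ∈ F := (Finset.mem_filter.1 hT).1
    have hvT : v ∈ T := (Finset.mem_filter.1 hT).2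
    refine ⟨?_, Finset.notMem_erase _ _, ?_, ?_⟩
    · rw [Finset.card_erase_of_mem hvT, htri T hTF]
    · rw [Finset.insert_erase hvT]; exact hTF
    · exact (Finset.erase_subset _ _).trans (subset_verts hTF)
  set U : Finset ℕ := L.biUnion id with hU
  have hUsub : U ⊆ vertsOf F := by
    intro u hu
    obtain ⟨l, hl, hul⟩ := Finset.mem_biUnion.1 hu
    exact (hLmem l hl).2.2.2 hul
  have hUv : v ∉ U := by
    intro hvu
    obtain ⟨l, hl, hvl⟩ := Finset.mem_biUnion.1 hvu
    exact (hLmem l hl).2.1 hvl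
  have claim1 : ∀ u ∈ U, d ≤ (L.filter fun l => u ∈ l).card := by
    intro u hu
    obtain ⟨l, hl, hul⟩ := Finset.mem_biUnion.1 hu
    have hne : u ≠ v := fun h => (hLmem l hl).2.1 (h ▸ hul)
    set e : Finset ℕ := insert v {u} with he
    have he2 : e.card = 2 := by
      rw [he, Finset.card_insert_of_notMem (by simp [hne.symm]), Finset.card_singleton]
    have heT : e ⊆ insert v l := by
      rw [he]
      exact Finset.insert_subset_insert _ (Finset.singleton_subset_iff.2 hul)
    have heF : e ∈ edgesOf F :=
      Finset.mem_biUnion.2 ⟨insert v l, (hLmem l hl).2.2.1,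
        Finset.mem_powersetCard.2 ⟨heT, he2⟩⟩
    refine (hd e heF).trans ?_
    apply Finset.card_le_card_of_injOn (fun T => T.erase v)
    · intro T hT
      have hTF : T ∈ F := (Finset.mem_filter.1 hT).1
      have heT' : e ⊆ T := (Finset.mem_filter.1 hT).2
      have hvT : v ∈ T := heT' (by simp [he])
      have huT : u ∈ T := heT' (by simp [he])
      refine Finset.mem_filter.2 ⟨Finset.mem_image.2 ⟨T, Finset.mem_filter.2 ⟨hTF, hvT⟩, rfl⟩, ?_⟩
      exact Finset.mem_erase.2 ⟨hne, huT⟩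
    · intro T hT T' hT' h
      have h' : T.erase v = T'.erase v := h
      have h1 : v ∈ T := (Finset.mem_filter.1 hT).2 (by simp [he])
      have h2 : v ∈ T' := (Finset.mem_filter.1 hT').2 (by simp [he])
      rw [← Finset.insert_erase h1, h', Finset.insert_erase h2]
  have claim2 : ∑ u ∈ U, (L.filter fun l => u ∈ l).card = 2 * L.card := by
    have hsub : ∀ l ∈ L, l ⊆ U := fun l hl x hx => Finset.mem_biUnion.2 ⟨l, hl, hx⟩
    rw [sum_card_filter_mem hsub]
    rw [Finset.sum_congr rfl (fun l hl => (hLmem l hl).1), Finset.sum_const, smul_eq_mul,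
      mul_comm]
  -- L nonempty
  obtain ⟨T₀, hT₀, hvT₀⟩ := Finset.mem_biUnion.1 hv
  have hT₀Fv : T₀ ∈ Fv := Finset.mem_filter.2 ⟨hT₀, hvT₀⟩
  have hl₀ : T₀.erase v ∈ L := Finset.mem_image.2 ⟨T₀, hT₀Fv, rfl⟩
  have hl₀card : (T₀.erase v).card = 2 := (hLmem _ hl₀).1
  obtain ⟨u, hu⟩ := Finset.card_pos.1 (by rw [hl₀card]; norm_num)
  have huU : u ∈ U := Finset.mem_biUnion.2 ⟨_, hl₀, hu⟩
  have claim3 : d + 1 ≤ U.card := by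
    have hK : d ≤ (L.filter fun l => u ∈ l).card := claim1 u huU
    have hmap : (L.filter fun l => u ∈ l).card ≤ (U.erase u).card := by
      apply Finset.card_le_card_of_injOn (fun l => ∑ x ∈ l.erase u, x)
      · intro l hl
        have hlL : l ∈ L := (Finset.mem_filter.1 hl).1
        have hul : u ∈ l := (Finset.mem_filter.1 hl).2
        have : (l.erase u).card = 1 := by
          rw [Finset.card_erase_of_mem hul, (hLmem l hlL).1]
        obtain ⟨a, ha⟩ := Finset.card_eq_one.1 this
        have haU : a ∈ U := Finset.mem_biUnion.2
          ⟨l, hlL, Finset.mem_of_mem_erase (ha ▸ Finset.mem_singleton_self a)⟩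
        have hau : a ≠ u := (Finset.mem_erase.1 (ha ▸ Finset.mem_singleton_self a)).1
        beta_reduce
        rw [ha, Finset.sum_singleton]
        exact Finset.mem_erase.2 ⟨hau, haU⟩
      · intro l hl l' hl' h
        have hul : u ∈ l := (Finset.mem_filter.1 hl).2
        have hul' : u ∈ l' := (Finset.mem_filter.1 hl').2
        have h1 : (l.erase u).card = 1 := by
          rw [Finset.card_erase_of_mem hul, (hLmem l (Finset.mem_filter.1 hl).1).1]
        have h1' : (l'.erase u).card = 1 := by
          rw [Finset.card_erase_of_mem hul', (hLmem l' (Finset.mem_filter.1 hl').1).1]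
        obtain ⟨a, ha⟩ := Finset.card_eq_one.1 h1
        obtain ⟨a', ha'⟩ := Finset.card_eq_one.1 h1'
        have h'' : ∑ x ∈ l.erase u, x = ∑ x ∈ l'.erase u, x := h
        rw [ha, ha', Finset.sum_singleton, Finset.sum_singleton] at h''
        subst h''
        rw [← Finset.insert_erase hul, ← Finset.insert_erase hul', ha, ha']
    have := Finset.card_erase_of_mem huU
    have hUpos : 1 ≤ U.card := Finset.card_pos.2 ⟨u, huU⟩
    omega
  constructor
  · have hins : insert v U ⊆ vertsOf F := Finset.insert_subset hv hUsub
    have := Finset.card_le_card hins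
    rw [Finset.card_insert_of_notMem hUv] at this
    omega
  · have hsum : d * U.card ≤ ∑ u ∈ U, (L.filter fun l => u ∈ l).card := by
      calc d * U.card = ∑ _u ∈ U, d := by rw [Finset.sum_const, smul_eq_mul, mul_comm]
      _ ≤ _ := Finset.sum_le_sum claim1
    rw [claim2, hLcard] at hsum
    calc d * (d + 1) ≤ d * U.card := Nat.mul_le_mul_left d claim3
    _ ≤ _ := hsum

lemma card_lower {F : Finset (Finset ℕ)} (hF : IsTriFam F) {d : ℕ}
    (hd : ∀ e ∈ edgesOf F, d ≤ edeg F e) : (d + 2).choose 3 ≤ F.card := by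
  have h1 : ∑ v ∈ vertsOf F, (F.filter fun T => v ∈ T).card = 3 * F.card := by
    rw [sum_card_filter_mem (fun T hT => subset_verts hT),
      Finset.sum_congr rfl (fun T hT => hF.2 T hT), Finset.sum_const, smul_eq_mul, mul_comm]
  obtain ⟨T₀, hT₀⟩ := hF.1
  have hT₀ne : T₀.Nonempty := Finset.card_pos.1 (by rw [hF.2 T₀ hT₀]; norm_num)
  obtain ⟨v₀, hv₀⟩ := hT₀ne
  have hv₀V : v₀ ∈ vertsOf F := subset_verts hT₀ hv₀
  have hm : d + 2 ≤ (vertsOf F).card := (link hF.2 hd hv₀V).1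
  have h2 : (vertsOf F).card * (d * (d + 1)) ≤ 2 * (3 * F.card) := by
    calc (vertsOf F).card * (d * (d + 1)) = ∑ _v ∈ vertsOf F, d * (d + 1) := by
          rw [Finset.sum_const, smul_eq_mul]
    _ ≤ ∑ v ∈ vertsOf F, 2 * (F.filter fun T => v ∈ T).card :=
        Finset.sum_le_sum (fun v hv => (link hF.2 hd hv).2)
    _ = 2 * (3 * F.card) := by rw [← Finset.mul_sum, h1]
  have h3 : (d + 2) * (d + 1) * d ≤ 6 * F.card := by
    calc (d + 2) * (d + 1) * d = (d * (d + 1)) * (d + 2) := by ring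
    _ ≤ (d * (d + 1)) * (vertsOf F).card := Nat.mul_le_mul_left _ hm
    _ = (vertsOf F).card * (d * (d + 1)) := Nat.mul_comm _ _
    _ ≤ 2 * (3 * F.card) := h2
    _ = 6 * F.card := by ring
  have h4 := choose3 d
  omega




lemma exists_eig_le {m : Type*} [Fintype m] [DecidableEq m] {M : Matrix m m ℝ}
    (hM : M.IsHermitian) {c : ℝ} (hc : 0 < c) (w : m → ℝ)
    (hpos : 0 < w ⬝ᵥ (M *ᵥ w))
    (hle : (M *ᵥ w) ⬝ᵥ (M *ᵥ w) ≤ c * (w ⬝ᵥ (M *ᵥ w))) :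
    ∃ μ : ℝ, 0 < μ ∧ μ ≤ c ∧ ∃ v : m → ℝ, v ≠ 0 ∧ M.mulVec v = μ • v := by
  classical
  set B := hM.eigenvectorBasis with hB
  set μ := hM.eigenvalues with hμ
  set W : EuclideanSpace ℝ m := WithLp.toLp 2 w with hW
  set l : m → ℝ := fun i => B.repr W i with hl
  have hw : ∑ i, l i • (B i : EuclideanSpace ℝ m) = W := B.sum_repr W
  have bridge : ∀ x y : EuclideanSpace ℝ m,
      (x : m → ℝ) ⬝ᵥ (y : m → ℝ) = (inner ℝ x y : ℝ) := by
    intro x y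
    simp [PiLp.inner_apply, dotProduct, mul_comm]
  have hMw : (M *ᵥ w : m → ℝ) = ∑ i, (l i * μ i) • (B i : EuclideanSpace ℝ m) := by
    have step1 : M *ᵥ w = M *ᵥ (∑ i, l i • (B i : EuclideanSpace ℝ m) : EuclideanSpace ℝ m) := by
      rw [hw]
    rw [step1]
    have step2 : M *ᵥ (∑ i, l i • (B i : EuclideanSpace ℝ m) : EuclideanSpace ℝ m)
        = ∑ i, l i • (M *ᵥ (B i : EuclideanSpace ℝ m)) := by
      have : ((∑ i, l i • (B i : EuclideanSpace ℝ m) : EuclideanSpace ℝ m) : m → ℝ)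
          = ∑ i, l i • ((B i : EuclideanSpace ℝ m) : m → ℝ) := by
        simp only [WithLp.ofLp_sum, WithLp.ofLp_smul]
      rw [this]
      simp only [← Matrix.mulVecLin_apply, map_sum, LinearMap.map_smul]
    rw [step2, WithLp.ofLp_sum]
    refine Finset.sum_congr rfl fun i _ => ?_
    have heig : M *ᵥ (B i : EuclideanSpace ℝ m) = μ i • (B i : EuclideanSpace ℝ m) :=
      hM.mulVec_eigenvectorBasis i
    rw [heig, smul_smul, WithLp.ofLp_smul]
  have hA : w ⬝ᵥ (M *ᵥ w) = ∑ i, μ i * l i ^ 2 := by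
    have : w ⬝ᵥ (M *ᵥ w)
        = ((∑ i, l i • (B i : EuclideanSpace ℝ m) : EuclideanSpace ℝ m) : m → ℝ)
          ⬝ᵥ ((∑ i, (l i * μ i) • (B i : EuclideanSpace ℝ m) : EuclideanSpace ℝ m) : m → ℝ) := by
      rw [hMw]
      congr 1
      rw [hw]
    rw [this, bridge, B.orthonormal.inner_sum]
    refine Finset.sum_congr rfl fun i _ => ?_
    simp [mul_comm, mul_assoc]
    ring
  have hBdot : (M *ᵥ w) ⬝ᵥ (M *ᵥ w) = ∑ i, (μ i * l i) ^ 2 := by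
    have : (M *ᵥ w) ⬝ᵥ (M *ᵥ w)
        = ((∑ i, (l i * μ i) • (B i : EuclideanSpace ℝ m) : EuclideanSpace ℝ m) : m → ℝ)
          ⬝ᵥ ((∑ i, (l i * μ i) • (B i : EuclideanSpace ℝ m) : EuclideanSpace ℝ m) : m → ℝ) := by
      rw [hMw]
    rw [this, bridge, B.orthonormal.inner_sum]
    refine Finset.sum_congr rfl fun i _ => ?_
    simp
    ring
  have key : ∃ i : m, 0 < μ i ∧ μ i ≤ c := by
    by_contra hcon
    push_neg at hcon
    rw [hA] at hpos
    have hex : ∃ i₀ : m, 0 < μ i₀ * l i₀ ^ 2 := by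
      by_contra h2
      push_neg at h2
      have : ∑ i, μ i * l i ^ 2 ≤ 0 := Finset.sum_nonpos fun i _ => h2 i
      linarith
    obtain ⟨i₀, hi₀⟩ := hex
    have hμ₀ : 0 < μ i₀ := by
      rcases lt_trichotomy (μ i₀) 0 with h | h | h
      · nlinarith [sq_nonneg (l i₀)]
      · rw [h] at hi₀; simp at hi₀
      · exact h
    have hcμ₀ : c < μ i₀ := hcon i₀ hμ₀
    have hterm : ∀ i ∈ Finset.univ, c * (μ i * l i ^ 2) ≤ (μ i * l i) ^ 2 := by
      intro i _
      rcases le_or_gt (μ i) 0 with h | h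
      · have h1 : μ i * l i ^ 2 ≤ 0 := mul_nonpos_of_nonpos_of_nonneg h (sq_nonneg _)
        have h2 : c * (μ i * l i ^ 2) ≤ 0 := mul_nonpos_of_nonneg_of_nonpos hc.le h1
        exact h2.trans (sq_nonneg _)
      · have := hcon i h
        nlinarith [sq_nonneg (l i)]
    have hstrict : c * (μ i₀ * l i₀ ^ 2) < (μ i₀ * l i₀) ^ 2 := by nlinarith
    have hlt : ∑ i, c * (μ i * l i ^ 2) < ∑ i, (μ i * l i) ^ 2 :=
      Finset.sum_lt_sum hterm ⟨i₀, Finset.mem_univ _, hstrict⟩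
    rw [← Finset.mul_sum] at hlt
    rw [hBdot, hA] at hle
    linarith
  obtain ⟨i, h1, h2⟩ := key
  have heig : M *ᵥ (B i : EuclideanSpace ℝ m) = μ i • (B i : EuclideanSpace ℝ m) :=
    hM.mulVec_eigenvectorBasis i
  refine ⟨μ i, h1, h2, (B i : EuclideanSpace ℝ m), ?_, heig⟩
  intro h0
  have hnorm : (inner ℝ (B i) (B i) : ℝ) = 1 := by
    have := B.orthonormal.1 i
    rw [real_inner_self_eq_norm_sq, this]
    norm_num
  rw [← bridge, h0] at hnorm
  simp at hnorm

variable {F : Finset (Finset ℕ)}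


lemma edge_card {e : Finset ℕ} (he : e ∈ edgesOf F) : e.card = 2 ∧ ∃ T ∈ F, e ⊆ T := by
  obtain ⟨T, hT, hmem⟩ := Finset.mem_biUnion.1 he
  obtain ⟨hsub, hcard⟩ := Finset.mem_powersetCard.1 hmem
  exact ⟨hcard, T, hT, hsub⟩

lemma triSign_sq (T e : Finset ℕ) :
    triSign T e ^ 2 = if e ⊆ T ∧ e.card = 2 ∧ T.card = 3 then 1 else 0 := by
  unfold triSign
  split_ifs <;> norm_num

lemma triSign_eq_zero {T e : Finset ℕ} (h : ¬ (e ⊆ T ∧ e.card = 2 ∧ T.card = 3)) :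
    triSign T e = 0 := if_neg h

lemma entry (F : Finset (Finset ℕ)) (f e : Finset ℕ) (hf : f ∈ edgesOf F)
    (he : e ∈ edgesOf F) :
    ((delta1 F)ᵀ * delta1 F) ⟨f, hf⟩ ⟨e, he⟩ = ∑ T ∈ F, triSign T f * triSign T e := by
  simp only [Matrix.mul_apply, Matrix.transpose_apply, delta1, Matrix.of_apply]
  exact Finset.sum_coe_sort F (fun T => triSign T f * triSign T e)

lemma diag (hF : IsTriFam F) {e : Finset ℕ} (he : e ∈ edgesOf F) :
    ((delta1 F)ᵀ * delta1 F) ⟨e, he⟩ ⟨e, he⟩ = (edeg F e : ℝ) := by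
  rw [entry F e e he he]
  have he2 := (edge_card he).1
  have hcongr : ∀ T ∈ F, triSign T e * triSign T e = if e ⊆ T then 1 else 0 := by
    intro T hT
    rw [← sq, triSign_sq]
    by_cases h : e ⊆ T
    · rw [if_pos ⟨h, he2, hF.2 T hT⟩, if_pos h]
    · rw [if_neg (fun hc => h hc.1), if_neg h]
  rw [Finset.sum_congr rfl hcongr, Finset.sum_boole]
  rfl

lemma offdiag (hF : IsTriFam F) {e f : Finset ℕ} (he : e ∈ edgesOf F) (hf : f ∈ edgesOf F)
    (hne : f ≠ e) :
    (((delta1 F)ᵀ * delta1 F) ⟨f, hf⟩ ⟨e, he⟩) ^ 2 = if e ∪ f ∈ F then 1 else 0 := by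
  rw [entry F f e hf he]
  have he2 := (edge_card he).1
  have hf2 := (edge_card hf).1
  have h3 : 3 ≤ (e ∪ f).card := card_two_ne he2 hf2 hne
  have hzero : ∀ T ∈ F, T ≠ e ∪ f → triSign T f * triSign T e = 0 := by
    intro T hT hTne
    by_cases hfT : f ⊆ T
    · by_cases heT : e ⊆ T
      · exfalso
        have : e ∪ f = T := Finset.eq_of_subset_of_card_le (Finset.union_subset heT hfT)
          (by rw [hF.2 T hT]; exact h3)
        exact hTne this.symm
      · rw [triSign_eq_zero (fun hc => heT hc.1), mul_zero]
    · rw [triSign_eq_zero (fun hc => hfT hc.1), zero_mul]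
  have hsum : ∑ T ∈ F, triSign T f * triSign T e
      = if e ∪ f ∈ F then triSign (e ∪ f) f * triSign (e ∪ f) e else 0 := by
    split_ifs with hin
    · exact Finset.sum_eq_single_of_mem _ hin hzero
    · exact Finset.sum_eq_zero fun T hT =>
        hzero T hT (fun h => hin (h ▸ hT))
  rw [hsum]
  split_ifs with hin
  · rw [mul_pow, triSign_sq, triSign_sq,
      if_pos ⟨Finset.subset_union_right, hf2, hF.2 _ hin⟩,
      if_pos ⟨Finset.subset_union_left, he2, hF.2 _ hin⟩]
    norm_num
  · norm_num

lemma count2 (hF : IsTriFam F) {e : Finset ℕ} (he : e ∈ edgesOf F) :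
    (((edgesOf F).erase e).filter fun f => e ∪ f ∈ F).card = 2 * edeg F e := by
  have he2 := (edge_card he).1
  have hset : ((edgesOf F).erase e).filter (fun f => e ∪ f ∈ F)
      = (F.filter fun T => e ⊆ T).biUnion fun T => (T.powersetCard 2).erase e := by
    ext f
    simp only [Finset.mem_filter, Finset.mem_erase, Finset.mem_biUnion, Finset.mem_powersetCard]
    constructor
    · rintro ⟨⟨hfe, hfE⟩, hin⟩
      have hf2 : f.card = 2 := (edge_card hfE).1
      exact ⟨e ∪ f, ⟨hin, Finset.subset_union_left⟩, hfe, Finset.subset_union_right, hf2⟩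
    · rintro ⟨T, ⟨hTF, heT⟩, hfe, hfT, hf2⟩
      have hTeq : e ∪ f = T := Finset.eq_of_subset_of_card_le (Finset.union_subset heT hfT)
        (by rw [hF.2 T hTF]; exact card_two_ne he2 hf2 hfe)
      exact ⟨⟨hfe, Finset.mem_biUnion.2 ⟨T, hTF, Finset.mem_powersetCard.2 ⟨hfT, hf2⟩⟩⟩,
        hTeq ▸ hTF⟩
  rw [hset, Finset.card_biUnion]
  · have hcongr : ∀ T ∈ F.filter fun T => e ⊆ T, ((T.powersetCard 2).erase e).card = 2 := by
      intro T hT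
      have heP : e ∈ T.powersetCard 2 :=
        Finset.mem_powersetCard.2 ⟨(Finset.mem_filter.1 hT).2, he2⟩
      rw [Finset.card_erase_of_mem heP, Finset.card_powersetCard,
        hF.2 T (Finset.mem_filter.1 hT).1]
      decide
    rw [Finset.sum_congr rfl hcongr, Finset.sum_const, smul_eq_mul, mul_comm]
    rfl
  · intro T hT T' hT' hTT'
    rw [Function.onFun, Finset.disjoint_left]
    intro f hfT hfT'
    have ha1 := Finset.mem_erase.1 hfT
    have ha2 := Finset.mem_powersetCard.1 ha1.2
    have hb1 := Finset.mem_erase.1 hfT'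
    have hb2 := Finset.mem_powersetCard.1 hb1.2
    have hfe := ha1.1
    have hfsub := ha2.1
    have hf2 := ha2.2
    have hfe' := hb1.1
    have hfsub' := hb2.1
    have hT1 : e ∪ f = T := Finset.eq_of_subset_of_card_le
      (Finset.union_subset (Finset.mem_filter.1 hT).2 hfsub)
      (by rw [hF.2 T (Finset.mem_filter.1 hT).1]; exact card_two_ne he2 hf2 hfe)
    have hT2 : e ∪ f = T' := Finset.eq_of_subset_of_card_le
      (Finset.union_subset (Finset.mem_filter.1 hT').2 hfsub')
      (by rw [hF.2 T' (Finset.mem_filter.1 hT').1]; exact card_two_ne he2 hf2 hfe')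
    exact hTT' (hT1 ▸ hT2)

lemma dot_diag (hF : IsTriFam F) {e : Finset ℕ} (he : e ∈ edgesOf F) :
    (Pi.single (⟨e, he⟩ : {x // x ∈ edgesOf F}) (1 : ℝ))
      ⬝ᵥ (((delta1 F)ᵀ * delta1 F) *ᵥ Pi.single ⟨e, he⟩ 1) = (edeg F e : ℝ) := by
  rw [Matrix.mulVec_single_one, single_dotProduct]
  simp only [mul_one, one_mul]
  exact diag hF he

lemma dot_sq (hF : IsTriFam F) {e : Finset ℕ} (he : e ∈ edgesOf F) :
    (((delta1 F)ᵀ * delta1 F) *ᵥ Pi.single (⟨e, he⟩ : {x // x ∈ edgesOf F}) (1 : ℝ))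
      ⬝ᵥ (((delta1 F)ᵀ * delta1 F) *ᵥ Pi.single ⟨e, he⟩ 1)
      = (edeg F e : ℝ) ^ 2 + 2 * (edeg F e : ℝ) := by
  classical
  rw [Matrix.mulVec_single_one]
  unfold dotProduct
  simp only [Matrix.col_apply]
  set S : Finset ℕ → ℝ := fun f => ∑ T ∈ F, triSign T f * triSign T e with hS
  have hrw : ∀ i : {x // x ∈ edgesOf F},
      ((delta1 F)ᵀ * delta1 F) i ⟨e, he⟩ = S i.1 := by
    intro i
    rw [← Subtype.eta i i.2]
    exact entry F i.1 e i.2 he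
  have h1 : ∑ i : {x // x ∈ edgesOf F},
      ((delta1 F)ᵀ * delta1 F) i ⟨e, he⟩ * ((delta1 F)ᵀ * delta1 F) i ⟨e, he⟩
      = ∑ f ∈ edgesOf F, S f * S f := by
    rw [Finset.sum_congr rfl fun i _ => by rw [hrw i]]
    exact Finset.sum_coe_sort (edgesOf F) (fun f => S f * S f)
  rw [h1, ← Finset.add_sum_erase _ _ he]
  have hSe : S e = (edeg F e : ℝ) := by
    simp only [hS]
    rw [← entry F e e he he]
    exact diag hF he
  have h2 : ∑ f ∈ (edgesOf F).erase e, S f * S f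
      = ∑ f ∈ (edgesOf F).erase e, (if e ∪ f ∈ F then (1 : ℝ) else 0) := by
    refine Finset.sum_congr rfl fun f hf => ?_
    have hfe := Finset.mem_erase.1 hf
    rw [← sq, ← offdiag hF he hfe.2 hfe.1, entry F f e hfe.2 he]
  rw [h2, Finset.sum_boole, count2 hF he, hSe]
  push_cast
  ring


lemma hermitianM (F : Finset (Finset ℕ)) : ((delta1 F)ᵀ * delta1 F).IsHermitian := by
  have h := Matrix.isHermitian_conjTranspose_mul_self (delta1 F)
  rwa [Matrix.conjTranspose_eq_transpose_of_trivial] at h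


end Stmt5Aux

/-- If `n ≥ 3` and `|𝒯| < C(n,3)`, then `λ(𝒯) ≤ n - 1`. -/
theorem stmt5 (n : ℕ) (hn : 3 ≤ n) (F : Finset (Finset ℕ)) (hF : IsTriFam F)
    (hcard : F.card < n.choose 3) : lam F ≤ (n : ℝ) - 1 := by
  classical
  have hlow : ¬ ∀ e ∈ edgesOf F, n - 2 ≤ Stmt5Aux.edeg F e := by
    intro hall
    have h1 := Stmt5Aux.card_lower hF hall
    rw [show n - 2 + 2 = n by omega] at h1
    omega
  push_neg at hlow
  obtain ⟨e, he, hdeg⟩ := hlow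
  have hdeg1 : 1 ≤ Stmt5Aux.edeg F e := by
    obtain ⟨-, T, hT, hsub⟩ := Stmt5Aux.edge_card he
    exact Finset.card_pos.2 ⟨T, Finset.mem_filter.2 ⟨hT, hsub⟩⟩
  have hdn : Stmt5Aux.edeg F e + 3 ≤ n := by omega
  have hD1 : (1 : ℝ) ≤ (Stmt5Aux.edeg F e : ℝ) := by exact_mod_cast hdeg1
  have hDn : (Stmt5Aux.edeg F e : ℝ) + 3 ≤ (n : ℝ) := by exact_mod_cast hdn
  have hM := Stmt5Aux.hermitianM F
  have hpos : 0 < (Pi.single (⟨e, he⟩ : {x // x ∈ edgesOf F}) (1 : ℝ))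
      ⬝ᵥ (((delta1 F)ᵀ * delta1 F) *ᵥ Pi.single ⟨e, he⟩ 1) := by
    rw [Stmt5Aux.dot_diag hF he]
    linarith
  have hle : (((delta1 F)ᵀ * delta1 F) *ᵥ Pi.single (⟨e, he⟩ : {x // x ∈ edgesOf F}) (1 : ℝ))
      ⬝ᵥ (((delta1 F)ᵀ * delta1 F) *ᵥ Pi.single ⟨e, he⟩ 1)
      ≤ ((n : ℝ) - 1) * ((Pi.single (⟨e, he⟩ : {x // x ∈ edgesOf F}) (1 : ℝ))
        ⬝ᵥ (((delta1 F)ᵀ * delta1 F) *ᵥ Pi.single ⟨e, he⟩ 1)) := by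
    rw [Stmt5Aux.dot_sq hF he, Stmt5Aux.dot_diag hF he]
    nlinarith [hD1, hDn]
  obtain ⟨μ, hμ0, hμc, v, hv, heig⟩ :=
    Stmt5Aux.exists_eig_le hM (c := (n : ℝ) - 1) (by linarith) _ hpos hle
  have hbdd : BddBelow {μ : ℝ | 0 < μ ∧ ∃ v : {x // x ∈ edgesOf F} → ℝ,
      v ≠ 0 ∧ ((delta1 F)ᵀ * delta1 F).mulVec v = μ • v} :=
    ⟨0, fun x hx => hx.1.le⟩
  have hmem : μ ∈ {μ : ℝ | 0 < μ ∧ ∃ v : {x // x ∈ edgesOf F} → ℝ,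
      v ≠ 0 ∧ ((delta1 F)ᵀ * delta1 F).mulVec v = μ • v} := ⟨hμ0, v, hv, heig⟩
  calc lam F ≤ μ := csInf_le hbdd hmem
  _ ≤ (n : ℝ) - 1 := hμc
end
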